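/- arXiv:2605.08251 — 9 statements merged into one kernel-verified Lean document; each statement's English description precedes it below -/
import Mathlib

section
/- Let ν > 0 and q ≥ 0 be real numbers, let λ₀,...,λ_k be reals with λ_j ≥ 1, let π₀,...,π_k be positive reals with ∑_{j=0}^k π_j = 1, and let c₀,...,c_k be real coefficients satisfying ∑_{j=0}^k c_j = 1 and ∑_{j=0}^k c_j λ_j = 0. Then the variance-penalty constant K := ν·(∑_{j=0}^k c_j² λ_j^q / π_j − 1) is strictly positive. -/
/-- Positive variance penalty for nontrivial Richardson rules:
`K = ν (∑ c_j² λ_j^q / π_j − 1) > 0`. -/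
theorem richardson_variance_penalty_pos
    (k : ℕ) (ν q : ℝ) (hν : 0 < ν) (hq : 0 ≤ q)
    (lam pi c : ℕ → ℝ)
    (hlam : ∀ j ≤ k, 1 ≤ lam j)
    (hpi_pos : ∀ j ≤ k, 0 < pi j)
    (hpi_sum : ∑ j ∈ Finset.range (k + 1), pi j = 1)
    (hc_sum : ∑ j ∈ Finset.range (k + 1), c j = 1)
    (hc_lam : ∑ j ∈ Finset.range (k + 1), c j * lam j = 0) :
    0 < ν * ((∑ j ∈ Finset.range (k + 1), (c j) ^ 2 * (lam j) ^ q / pi j) - 1) := by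
  have key : 1 < ∑ j ∈ Finset.range (k + 1), (c j) ^ 2 * (lam j) ^ q / pi j := by
    -- step 1: lower bound by the q = 0 sum
    have h1 : ∑ j ∈ Finset.range (k + 1), (c j) ^ 2 / pi j ≤
        ∑ j ∈ Finset.range (k + 1), (c j) ^ 2 * (lam j) ^ q / pi j := by
      apply Finset.sum_le_sum
      intro j hj
      have hjk : j ≤ k := Nat.lt_succ_iff.mp (Finset.mem_range.mp hj)
      have hl : (1 : ℝ) ≤ (lam j) ^ q := Real.one_le_rpow (hlam j hjk) hq
      have hp := hpi_pos j hjk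
      have hnum : (c j) ^ 2 ≤ (c j) ^ 2 * (lam j) ^ q := by nlinarith [sq_nonneg (c j)]
      exact by gcongr
    -- step 2: identity  ∑ c²/π = 1 + ∑ (c - π)²/π
    have h2 : ∑ j ∈ Finset.range (k + 1), (c j) ^ 2 / pi j =
        1 + ∑ j ∈ Finset.range (k + 1), (c j - pi j) ^ 2 / pi j := by
      have : ∀ j ∈ Finset.range (k + 1),
          (c j) ^ 2 / pi j = pi j + 2 * (c j - pi j) + (c j - pi j) ^ 2 / pi j := by
        intro j hj
        have hp := hpi_pos j (Nat.lt_succ_iff.mp (Finset.mem_range.mp hj))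
        field_simp
        ring
      rw [Finset.sum_congr rfl this, Finset.sum_add_distrib, Finset.sum_add_distrib,
        hpi_sum, ← Finset.mul_sum, Finset.sum_sub_distrib, hc_sum, hpi_sum]
      ring
    -- step 3: ∑ (c - π)²/π > 0
    have h3 : 0 < ∑ j ∈ Finset.range (k + 1), (c j - pi j) ^ 2 / pi j := by
      have hne : ∃ j ∈ Finset.range (k + 1), c j ≠ pi j := by
        by_contra h
        push_neg at h
        have heq : ∑ j ∈ Finset.range (k + 1), c j * lam j =
            ∑ j ∈ Finset.range (k + 1), pi j * lam j :=
          Finset.sum_congr rfl fun j hj => by rw [h j hj]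
        have hge : (1 : ℝ) ≤ ∑ j ∈ Finset.range (k + 1), pi j * lam j := by
          calc (1 : ℝ) = ∑ j ∈ Finset.range (k + 1), pi j := hpi_sum.symm
            _ ≤ ∑ j ∈ Finset.range (k + 1), pi j * lam j := by
                apply Finset.sum_le_sum
                intro j hj
                have hjk := Nat.lt_succ_iff.mp (Finset.mem_range.mp hj)
                nlinarith [hpi_pos j hjk, hlam j hjk]
        rw [hc_lam] at heq
        linarith
      obtain ⟨j₀, hj₀, hne⟩ := hne
      apply Finset.sum_pos'
      · intro j hj
        have hp := hpi_pos j (Nat.lt_succ_iff.mp (Finset.mem_range.mp hj))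
        positivity
      · refine ⟨j₀, hj₀, ?_⟩
        have hp := hpi_pos j₀ (Nat.lt_succ_iff.mp (Finset.mem_range.mp hj₀))
        have hd : c j₀ - pi j₀ ≠ 0 := sub_ne_zero.mpr hne
        have hsq : (0 : ℝ) < (c j₀ - pi j₀) ^ 2 := by positivity
        exact div_pos hsq hp
      -- positivity might not use hne; fallback below
    linarith
  have := mul_pos hν (sub_pos.mpr key)
  linarith
end

section
/- Let D > 0, K > 0, p ≥ 1, 0 ≤ q < 2p be reals, let f(x) = D·x^{2p} − K·x^q and C = (K/D)^{1/(2p−q)}. Then there exists a closed interval U = [C−δ₀, C+δ₀] with 0 < δ₀ < C such that the following holds: if (G_n) is a sequence of differentiable functions G_n : ℝ → ℝ such that sup_{x∈U} |G_n(x) − f(x)| → 0 and sup_{x∈U} |G_n′(x) − f′(x)| → 0 as n → ∞, then for all sufficiently large n the function G_n has exactly one root x_n in U, and x_n → C. Moreover, if there exist M > 0 and η > 0 with sup_{x∈U} |G_n(x) − f(x)| ≤ M·n^{−η} and sup_{x∈U} |G_n′(x) − f′(x)| ≤ M·n^{−η} for all n, then there is a constant M′ > 0 with |x_n − C| ≤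 M′·n^{−η} for all sufficiently large n. -/
open Filter

/-- The rescaled leading MSE balance. -/
noncomputable def balanceFn (D K p q : ℝ) : ℝ → ℝ :=
  fun x => D * x ^ (2 * p) - K * x ^ q

/-- Its positive root. -/
noncomputable def balanceRoot (D K p q : ℝ) : ℝ :=
  (K / D) ^ (1 / (2 * p - q))

lemma balanceFn_hasDerivAt (D K p q : ℝ) {x : ℝ} (hx : 0 < x) :
    HasDerivAt (balanceFn D K p q)
      (D * ((2 * p) * x ^ (2 * p - 1)) - K * (q * x ^ (q - 1))) x := by
  have h1 := (Real.hasDerivAt_rpow_const (x := x) (p := 2 * p) (Or.inl hx.ne')).const_mul D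
  have h2 := (Real.hasDerivAt_rpow_const (x := x) (p := q) (Or.inl hx.ne')).const_mul K
  exact h1.sub h2

lemma balanceFn_deriv (D K p q : ℝ) {x : ℝ} (hx : 0 < x) :
    deriv (balanceFn D K p q) x
      = D * ((2 * p) * x ^ (2 * p - 1)) - K * (q * x ^ (q - 1)) :=
  (balanceFn_hasDerivAt D K p q hx).deriv

/-- A quantitative lower bound on growth from a derivative lower bound. -/
lemma growth_bound {f : ℝ → ℝ} {a b m : ℝ}
    (hf : ∀ x ∈ Set.Icc a b, DifferentiableAt ℝ f x)
    (hm : ∀ x ∈ Set.Icc a b, m ≤ deriv f x)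
    {x y : ℝ} (hx : x ∈ Set.Icc a b) (hy : y ∈ Set.Icc a b) (hxy : x ≤ y) :
    m * (y - x) ≤ f y - f x := by
  refine Convex.mul_sub_le_image_sub_of_le_deriv (convex_Icc a b)
    (fun z hz => (hf z hz).continuousAt.continuousWithinAt)
    (fun z hz => (hf z (interior_subset hz)).differentiableWithinAt)
    (fun z hz => hm z (interior_subset hz)) x hx y hy hxy

/-- Stability of the balanced local root: there is a compact interval
`U = [C−δ₀, C+δ₀]` around `C = (K/D)^{1/(2p−q)}` such that any sequence of
differentiable functions `G_n` converging to `f(x) = D x^{2p} − K x^q` in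
`C⁰`- and `C¹`-sup norm on `U` eventually has a unique root `x_n ∈ U`,
these roots converge to `C`, and under `O(n^{−η})` convergence rates the
roots satisfy `|x_n − C| ≤ M' n^{−η}`. -/
theorem root_stability
    (D K p q : ℝ) (hD : 0 < D) (hK : 0 < K) (hp : 1 ≤ p) (hq0 : 0 ≤ q)
    (hq : q < 2 * p) :
    ∃ δ₀ : ℝ, 0 < δ₀ ∧ δ₀ < balanceRoot D K p q ∧
      ∀ G : ℕ → ℝ → ℝ,
        (∀ n, Differentiable ℝ (G n)) →
        (∀ e > (0 : ℝ), ∃ N : ℕ, ∀ n ≥ N,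
          ∀ x ∈ Set.Icc (balanceRoot D K p q - δ₀) (balanceRoot D K p q + δ₀),
            |G n x - balanceFn D K p q x| ≤ e) →
        (∀ e > (0 : ℝ), ∃ N : ℕ, ∀ n ≥ N,
          ∀ x ∈ Set.Icc (balanceRoot D K p q - δ₀) (balanceRoot D K p q + δ₀),
            |deriv (G n) x - deriv (balanceFn D K p q) x| ≤ e) →
        ((∃ N : ℕ, ∀ n ≥ N, ∃! x : ℝ,
            x ∈ Set.Icc (balanceRoot D K p q - δ₀) (balanceRoot D K p q + δ₀) ∧
            G n x = 0) ∧
         (∀ xs : ℕ → ℝ,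
            (∀ᶠ n in atTop,
              xs n ∈ Set.Icc (balanceRoot D K p q - δ₀) (balanceRoot D K p q + δ₀) ∧
              G n (xs n) = 0) →
            Tendsto xs atTop (nhds (balanceRoot D K p q))) ∧
         (∀ M η : ℝ, 0 < M → 0 < η →
            (∀ n : ℕ, 1 ≤ n →
              ∀ x ∈ Set.Icc (balanceRoot D K p q - δ₀) (balanceRoot D K p q + δ₀),
                |G n x - balanceFn D K p q x| ≤ M * (n : ℝ) ^ (-η) ∧
                |deriv (G n) x - deriv (balanceFn D K p q) x| ≤ M * (n : ℝ) ^ (-η)) →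
            ∃ M' > (0 : ℝ), ∃ N : ℕ, ∀ n ≥ N,
              ∀ x ∈ Set.Icc (balanceRoot D K p q - δ₀) (balanceRoot D K p q + δ₀),
                G n x = 0 → |x - balanceRoot D K p q| ≤ M' * (n : ℝ) ^ (-η))) := by
  set C := balanceRoot D K p q with hCdef
  set f := balanceFn D K p q with hfdef
  have hKD : (0 : ℝ) < K / D := div_pos hK hD
  have hCpos : 0 < C := Real.rpow_pos_of_pos hKD _
  have hsub : (0 : ℝ) < 2 * p - q := by linarith
  -- C ^ (2p - q) = K / D
  have hCpow : C ^ (2 * p - q) = K / D := by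
    rw [hCdef, balanceRoot, ← Real.rpow_mul hKD.le, one_div_mul_cancel hsub.ne',
      Real.rpow_one]
  -- f C = 0
  have hfC : f C = 0 := by
    have e0 : C ^ (2 * p) = C ^ q * (K / D) := by
      rw [show (2 * p : ℝ) = q + (2 * p - q) by ring, Real.rpow_add hCpos, hCpow]
    show D * C ^ (2 * p) - K * C ^ q = 0
    rw [e0]; field_simp; ring
  -- the derivative function
  set φ : ℝ → ℝ := fun x => D * ((2 * p) * x ^ (2 * p - 1)) - K * (q * x ^ (q - 1))
    with hφdef
  have hφC : φ C = (2 * p - q) * K * C ^ (q - 1) := by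
    have e1 : C ^ (2 * p - 1) = C ^ (q - 1) * (K / D) := by
      rw [show (2 * p - 1 : ℝ) = (q - 1) + (2 * p - q) by ring, Real.rpow_add hCpos,
        hCpow]
    show D * (2 * p * C ^ (2 * p - 1)) - K * (q * C ^ (q - 1))
      = (2 * p - q) * K * C ^ (q - 1)
    rw [e1]; field_simp
  have hφCpos : 0 < φ C := by
    rw [hφC]
    positivity
  -- continuity of φ at C
  have hφcont : ContinuousAt φ C := by
    have h1 : ContinuousAt (fun x : ℝ => x ^ (2 * p - 1)) C :=
      Real.continuousAt_rpow_const C _ (Or.inl hCpos.ne')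
    have h2 : ContinuousAt (fun x : ℝ => x ^ (q - 1)) C :=
      Real.continuousAt_rpow_const C _ (Or.inl hCpos.ne')
    exact ((continuousAt_const.mul (continuousAt_const.mul h1)).sub
      (continuousAt_const.mul (continuousAt_const.mul h2)))
  -- pick ε > 0 and m > 0 with φ ≥ m on the ball of radius ε around C
  obtain ⟨ε, hεpos, m, hmpos, hball⟩ :
      ∃ ε > (0:ℝ), ∃ m > (0:ℝ), ∀ y : ℝ, dist y C < ε → m ≤ φ y := by
    have hev : ∀ᶠ x in nhds C, φ C / 2 < φ x :=
      hφcont.eventually (eventually_gt_nhds (half_lt_self hφCpos))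
    obtain ⟨ε, hεpos, hball⟩ := Metric.eventually_nhds_iff.mp hev
    exact ⟨ε, hεpos, φ C / 2, half_pos hφCpos, fun y hy => (hball hy).le⟩
  set δ₀ := min (ε / 2) (C / 2) with hδdef
  have hδpos : 0 < δ₀ := lt_min (by linarith) (by linarith)
  have hδltC : δ₀ < C := lt_of_le_of_lt (min_le_right _ _) (by linarith)
  refine ⟨δ₀, hδpos, hδltC, ?_⟩
  set a := C - δ₀ with hadef
  set b := C + δ₀ with hbdef
  have hapos : 0 < a := by rw [hadef]; linarith
  have hab : a ≤ b := by rw [hadef, hbdef]; linarith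
  have haC : a ≤ C := by rw [hadef]; linarith
  have hCb : C ≤ b := by rw [hbdef]; linarith
  have hCmem : C ∈ Set.Icc a b := ⟨haC, hCb⟩
  -- on U, points are positive and φ ≥ m, deriv f = φ
  have hUpos : ∀ x ∈ Set.Icc a b, 0 < x := fun x hx => lt_of_lt_of_le hapos hx.1
  have hUm : ∀ x ∈ Set.Icc a b, m ≤ deriv f x := by
    intro x hx
    have hdist : dist x C < ε := by
      rw [Real.dist_eq, abs_sub_lt_iff]
      have h1 : x - C ≤ δ₀ := by
        have := hx.2; rw [hbdef] at this; linarith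
      have h2 : C - x ≤ δ₀ := by
        have := hx.1; rw [hadef] at this; linarith
      have hδε : δ₀ < ε := lt_of_le_of_lt (min_le_left _ _) (by linarith)
      constructor <;> linarith
    rw [hfdef, balanceFn_deriv D K p q (hUpos x hx)]
    exact hball x hdist
  have hUdiff : ∀ x ∈ Set.Icc a b, DifferentiableAt ℝ f x := fun x hx =>
    (balanceFn_hasDerivAt D K p q (hUpos x hx)).differentiableAt
  -- quantitative growth of f around its root C
  have hkeyR : ∀ x ∈ Set.Icc a b, C ≤ x → m * (x - C) ≤ f x := by
    intro x hx hCx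
    have := growth_bound hUdiff hUm hCmem hx hCx
    rw [hfC] at this; linarith
  have hkeyL : ∀ x ∈ Set.Icc a b, x ≤ C → f x ≤ -(m * (C - x)) := by
    intro x hx hxC
    have := growth_bound hUdiff hUm hx hCmem hxC
    rw [hfC] at this; linarith
  have hkey : ∀ x ∈ Set.Icc a b, m * |x - C| ≤ |f x| := by
    intro x hx
    rcases le_total C x with h | h
    · have h1 := hkeyR x hx h
      rw [abs_of_nonneg (by linarith : (0:ℝ) ≤ x - C)]
      calc m * (x - C) ≤ f x := h1
        _ ≤ |f x| := le_abs_self _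
    · have h1 := hkeyL x hx h
      rw [abs_of_nonpos (by linarith : x - C ≤ 0)]
      have : m * (C - x) ≤ -(f x) := by linarith
      calc m * -(x - C) = m * (C - x) := by ring
        _ ≤ -(f x) := this
        _ ≤ |f x| := neg_le_abs _
  intro G hGdiff hC0 hC1
  -- Part 1: eventual unique root
  have part1 : ∃ N : ℕ, ∀ n ≥ N, ∃! x : ℝ, x ∈ Set.Icc a b ∧ G n x = 0 := by
    obtain ⟨N₀, hN₀⟩ := hC0 (m * δ₀ / 2) (by positivity)
    obtain ⟨N₁, hN₁⟩ := hC1 (m / 2) (by positivity)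
    refine ⟨max N₀ N₁, fun n hn => ?_⟩
    have hn₀ : n ≥ N₀ := le_trans (le_max_left _ _) hn
    have hn₁ : n ≥ N₁ := le_trans (le_max_right _ _) hn
    -- G n is strictly monotone on [a, b]
    have hmono : StrictMonoOn (G n) (Set.Icc a b) := by
      refine strictMonoOn_of_deriv_pos (convex_Icc a b)
        ((hGdiff n).continuous.continuousOn) (fun x hx => ?_)
      have hx' : x ∈ Set.Icc a b := interior_subset hx
      have h1 := hN₁ n hn₁ x hx'
      have h2 := hUm x hx'
      have := abs_le.mp h1
      linarith [this.1]
    -- sign at endpoints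
    have hamem : a ∈ Set.Icc a b := Set.left_mem_Icc.mpr hab
    have hbmem : b ∈ Set.Icc a b := Set.right_mem_Icc.mpr hab
    have hGa : G n a ≤ 0 := by
      have h1 := hkeyL a hamem haC
      have h2 := abs_le.mp (hN₀ n hn₀ a hamem)
      have : C - a = δ₀ := by rw [hadef]; ring
      rw [this] at h1
      nlinarith [hmpos, hδpos]
    have hGb : 0 ≤ G n b := by
      have h1 := hkeyR b hbmem hCb
      have h2 := abs_le.mp (hN₀ n hn₀ b hbmem)
      have : b - C = δ₀ := by rw [hbdef]; ring
      rw [this] at h1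
      nlinarith [hmpos, hδpos]
    have hivt : (0 : ℝ) ∈ G n '' Set.Icc a b := by
      apply intermediate_value_Icc hab ((hGdiff n).continuous.continuousOn)
      exact ⟨hGa, hGb⟩
    obtain ⟨x, hxmem, hxroot⟩ := hivt
    refine ⟨x, ⟨hxmem, hxroot⟩, ?_⟩
    rintro y ⟨hymem, hyroot⟩
    exact hmono.injOn hymem hxmem (by rw [hxroot, hyroot])
  refine ⟨part1, ?_, ?_⟩
  -- Part 2: convergence of roots
  · intro xs hxs
    rw [Metric.tendsto_atTop]
    intro e he
    obtain ⟨N₀, hN₀⟩ := hC0 (m * e / 2) (by positivity)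
    rw [eventually_atTop] at hxs
    obtain ⟨N₁, hN₁⟩ := hxs
    refine ⟨max N₀ N₁, fun n hn => ?_⟩
    have hn₀ : n ≥ N₀ := le_trans (le_max_left _ _) hn
    have hn₁ : n ≥ N₁ := le_trans (le_max_right _ _) hn
    obtain ⟨hxmem, hxroot⟩ := hN₁ n hn₁
    have h1 := hkey (xs n) hxmem
    have h2 := hN₀ n hn₀ (xs n) hxmem
    rw [hxroot, zero_sub, abs_neg] at h2
    have : m * |xs n - C| ≤ m * e / 2 := le_trans h1 h2
    rw [Real.dist_eq]
    have hhalf : |xs n - C| ≤ e / 2 := by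
      by_contra hcon
      push_neg at hcon
      nlinarith
    linarith
  -- Part 3: rate of convergence
  · intro M η hM hη hrate
    refine ⟨M / m, by positivity, 1, fun n hn x hx hroot => ?_⟩
    have h1 := hkey x hx
    have h2 := (hrate n hn x hx).1
    rw [hroot, zero_sub, abs_neg] at h2
    rw [div_mul_eq_mul_div, le_div_iff₀ hmpos]
    calc |x - C| * m = m * |x - C| := by ring
      _ ≤ |f x| := h1
      _ ≤ M * (n : ℝ) ^ (-η) := h2
end

section
/- Let D > 0, K > 0, p ≥ 1, 0 ≤ q < 2p, δ_b > 0, δ_v > 0, L_b > 0, L_v > 0, ε₀ > 0 be reals, set r = 1/(2p−q) and C = (K/D)^{1/(2p−q)}. Let Δ : (0,∞) × (0,∞) → ℝ satisfy: (a) for each B > 0, ε ↦ Δ(ε,B) is continuous on (0, ε₀]; and (b) |Δ(ε,B) − D·ε^{2p} + K·ε^q/B| ≤ L_b·ε^{2p+δ_b} + L_v·ε^{q+δ_v}/B for all 0 < ε ≤ ε₀ and all B > 0. Fix 0 < m < C < M. Then: (i) there exists B₁ > 0 such that for every B ≥ B₁ there exists ε ∈ [m·B^{−r}, M·B^{−r}]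 with Δ(ε,B) = 0; and (ii) for every η′ > 0 there exists B₂ > 0 such that for every B ≥ B₂, every zero ε of Δ(·,B) in [m·B^{−r}, M·B^{−r}] satisfies |ε·B^r − C| ≤ η′. -/
private lemma mscb_thresh (a c : ℝ) (ha : 0 < a) (hc : 0 < c) :
    ∃ X : ℝ, 1 ≤ X ∧ ∀ B : ℝ, X ≤ B → B ^ (-a) < c := by
  refine ⟨max 1 ((1/c) ^ (1/a) + 1), le_max_left _ _, fun B hB => ?_⟩
  have h1 : (1:ℝ) ≤ B := le_trans (le_max_left _ _) hB
  have hB0 : 0 < B := lt_of_lt_of_le one_pos h1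
  have h2 : (1/c) ^ (1/a) + 1 ≤ B := le_trans (le_max_right _ _) hB
  have h3 : (1/c) ^ (1/a) < B := by linarith
  have h4 : 1/c < B ^ a := by
    calc 1/c = ((1/c)^(1/a))^a := by
          rw [← Real.rpow_mul (le_of_lt (one_div_pos.mpr hc)), one_div a,
            inv_mul_cancel₀ (ne_of_gt ha), Real.rpow_one]
    _ < B ^ a := Real.rpow_lt_rpow (Real.rpow_nonneg (by positivity) _) h3 ha
  rw [Real.rpow_neg hB0.le]
  calc (B^a)⁻¹ < (1/c)⁻¹ := inv_strictAnti₀ (one_div_pos.mpr hc) h4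
  _ = c := by simp

set_option maxHeartbeats 1600000 in
/-- Master local help-harm theorem, subcritical case `0 ≤ q < 2p`: under the
leading MSE-balance with power-law remainder bound, for large budgets `B` the
MSE difference `Δ(·,B)` has a zero in the rescaled window
`[m B^{−r}, M B^{−r}]` with `r = 1/(2p−q)`, and every such zero `ε` satisfies
`ε B^r → C = (K/D)^{1/(2p−q)}`. -/
theorem master_subcritical_boundary
    (D K p q δb δv Lb Lv ε₀ : ℝ)
    (hD : 0 < D) (hK : 0 < K) (hp : 1 ≤ p) (hq0 : 0 ≤ q) (hq : q < 2 * p)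
    (hδb : 0 < δb) (hδv : 0 < δv) (hLb : 0 < Lb) (hLv : 0 < Lv) (hε₀ : 0 < ε₀)
    (Δ : ℝ → ℝ → ℝ)
    (hcont : ∀ B : ℝ, 0 < B → ContinuousOn (fun ε => Δ ε B) (Set.Ioc 0 ε₀))
    (hbound : ∀ ε B : ℝ, 0 < ε → ε ≤ ε₀ → 0 < B →
      |Δ ε B - D * ε ^ (2 * p) + K * ε ^ q / B|
        ≤ Lb * ε ^ (2 * p + δb) + Lv * ε ^ (q + δv) / B)
    (m M : ℝ) (hm : 0 < m) (hmC : m < (K / D) ^ (1 / (2 * p - q)))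
    (hCM : (K / D) ^ (1 / (2 * p - q)) < M) :
    (∃ B₁ > (0 : ℝ), ∀ B ≥ B₁,
      ∃ ε ∈ Set.Icc (m * B ^ (-(1 / (2 * p - q)))) (M * B ^ (-(1 / (2 * p - q)))),
        Δ ε B = 0) ∧
    (∀ η' > (0 : ℝ), ∃ B₂ > (0 : ℝ), ∀ B ≥ B₂,
      ∀ ε ∈ Set.Icc (m * B ^ (-(1 / (2 * p - q)))) (M * B ^ (-(1 / (2 * p - q)))),
        Δ ε B = 0 →
          |ε * B ^ (1 / (2 * p - q)) - (K / D) ^ (1 / (2 * p - q))| ≤ η') := by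
  have hDK : 0 < K / D := div_pos hK hD
  have hs : (0:ℝ) < 2*p - q := by linarith
  set r : ℝ := 1 / (2 * p - q) with hr
  have hrpos : 0 < r := by rw [hr]; positivity
  have hr1 : r * (2*p - q) = 1 := by rw [hr]; field_simp
  set C : ℝ := (K/D) ^ r with hCdef
  have hCpos : 0 < C := Real.rpow_pos_of_pos hDK r
  have hmM : m < M := lt_trans hmC hCM
  have hMpos : 0 < M := lt_trans hCpos hCM
  set g : ℝ → ℝ := fun t => D * t ^ (2*p) - K * t ^ q with hgdef
  have hCs : C ^ (2*p - q) = K / D := by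
    rw [hCdef, ← Real.rpow_mul hDK.le, hr1, Real.rpow_one]
  have hgfact : ∀ t : ℝ, 0 < t → g t = t ^ q * (D * t ^ (2*p - q) - K) := by
    intro t ht
    have h2p : (2:ℝ)*p = q + (2*p - q) := by ring
    simp only [hgdef]
    rw [h2p, Real.rpow_add ht]; ring
  have hglt : ∀ t : ℝ, 0 < t → t < C → g t < 0 := by
    intro t ht htC
    rw [hgfact t ht]
    have h1 : t ^ (2*p-q) < C ^ (2*p-q) := Real.rpow_lt_rpow ht.le htC hs
    rw [hCs] at h1
    have h2 := (lt_div_iff₀ hD).mp h1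
    have h3 : 0 < t ^ q := Real.rpow_pos_of_pos ht q
    nlinarith
  have hggt : ∀ t : ℝ, 0 < t → C < t → 0 < g t := by
    intro t ht htC
    rw [hgfact t ht]
    have h1 : C ^ (2*p-q) < t ^ (2*p-q) := Real.rpow_lt_rpow hCpos.le htC hs
    rw [hCs] at h1
    have h2 := (div_lt_iff₀ hD).mp h1
    have h3 : 0 < t ^ q := Real.rpow_pos_of_pos ht q
    nlinarith
  -- constants
  set Mx : ℝ := max M 1 with hMx
  have hMxpos : (0:ℝ) < Mx := lt_of_lt_of_le one_pos (le_max_right _ _)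
  set δ : ℝ := min δb δv with hδ
  have hδpos : 0 < δ := lt_min hδb hδv
  set K0 : ℝ := Lb * Mx ^ (2*p+δb) + Lv * Mx ^ (q+δv) with hK0
  have hK0pos : 0 < K0 :=
    add_pos (mul_pos hLb (Real.rpow_pos_of_pos hMxpos _))
      (mul_pos hLv (Real.rpow_pos_of_pos hMxpos _))
  -- key estimate
  have key : ∀ B t : ℝ, 1 ≤ B → m ≤ t → t ≤ M → t * B^(-r) ≤ ε₀ →
      |Δ (t * B^(-r)) B - B^(-(2*p*r)) * g t| ≤ K0 * (B^(-(2*p*r)) * B^(-(r*δ))) := by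
    intro B t hB1 hmt htM hεε₀
    have hB0 : 0 < B := lt_of_lt_of_le one_pos hB1
    have ht0 : 0 < t := lt_of_lt_of_le hm hmt
    have hBr : 0 < B^(-r) := Real.rpow_pos_of_pos hB0 _
    have hε0 : 0 < t * B^(-r) := mul_pos ht0 hBr
    have hpow : ∀ a : ℝ, (t * B^(-r)) ^ a = t ^ a * B ^ (-(r*a)) := by
      intro a
      rw [Real.mul_rpow ht0.le hBr.le, ← Real.rpow_mul hB0.le, neg_mul]
    have hid : D * (t*B^(-r))^(2*p) - K * (t*B^(-r))^q / B = B^(-(2*p*r)) * g t := by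
      rw [hpow, hpow, show -(r*(2*p)) = -(2*p*r) from by ring,
        show B ^ (-(r*q)) = B ^ (-(2*p*r)) * B from by
          rw [show -(r*q) = -(2*p*r) + 1 from by linear_combination hr1,
            Real.rpow_add hB0, Real.rpow_one]]
      simp only [hgdef]
      field_simp
    have hrem1 : Lb * (t*B^(-r))^(2*p+δb)
        = Lb * t^(2*p+δb) * (B^(-(2*p*r)) * B^(-(r*δb))) := by
      rw [hpow, show -(r*(2*p+δb)) = -(2*p*r) + -(r*δb) from by ring, Real.rpow_add hB0]
      ring
    have hrem2 : Lv * (t*B^(-r))^(q+δv) / B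
        = Lv * t^(q+δv) * (B^(-(2*p*r)) * B^(-(r*δv))) := by
      rw [hpow, show -(r*(q+δv)) = (-(2*p*r) + -(r*δv)) + 1 from by linear_combination hr1,
        Real.rpow_add hB0, Real.rpow_add hB0, Real.rpow_one]
      field_simp
    have hb := hbound (t*B^(-r)) B hε0 hεε₀ hB0
    have heq : Δ (t*B^(-r)) B - B^(-(2*p*r)) * g t
        = Δ (t*B^(-r)) B - D*(t*B^(-r))^(2*p) + K*(t*B^(-r))^q / B := by
      rw [← hid]; ring
    rw [heq]
    refine le_trans hb ?_
    rw [hrem1, hrem2]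
    have hBp : 0 < B^(-(2*p*r)) := Real.rpow_pos_of_pos hB0 _
    have htb : t^(2*p+δb) ≤ Mx^(2*p+δb) :=
      Real.rpow_le_rpow ht0.le (le_trans htM (le_max_left M 1)) (by linarith)
    have htv : t^(q+δv) ≤ Mx^(q+δv) :=
      Real.rpow_le_rpow ht0.le (le_trans htM (le_max_left M 1)) (by linarith)
    have hBb : B^(-(r*δb)) ≤ B^(-(r*δ)) := by
      apply Real.rpow_le_rpow_of_exponent_le hB1
      have : r * δ ≤ r * δb := mul_le_mul_of_nonneg_left (min_le_left _ _) hrpos.le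
      linarith
    have hBv : B^(-(r*δv)) ≤ B^(-(r*δ)) := by
      apply Real.rpow_le_rpow_of_exponent_le hB1
      have : r * δ ≤ r * δv := mul_le_mul_of_nonneg_left (min_le_right _ _) hrpos.le
      linarith
    have hBδ : 0 < B^(-(r*δ)) := Real.rpow_pos_of_pos hB0 _
    have h1 : Lb * t^(2*p+δb) * (B^(-(2*p*r)) * B^(-(r*δb)))
        ≤ Lb * Mx^(2*p+δb) * (B^(-(2*p*r)) * B^(-(r*δ))) := by
      apply mul_le_mul (mul_le_mul_of_nonneg_left htb hLb.le)
        (mul_le_mul_of_nonneg_left hBb hBp.le) (by positivity) (by positivity)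
    have h2 : Lv * t^(q+δv) * (B^(-(2*p*r)) * B^(-(r*δv)))
        ≤ Lv * Mx^(q+δv) * (B^(-(2*p*r)) * B^(-(r*δ))) := by
      apply mul_le_mul (mul_le_mul_of_nonneg_left htv hLv.le)
        (mul_le_mul_of_nonneg_left hBv hBp.le) (by positivity) (by positivity)
    have hK0eq : K0 * (B^(-(2*p*r)) * B^(-(r*δ)))
        = Lb * Mx^(2*p+δb) * (B^(-(2*p*r)) * B^(-(r*δ)))
          + Lv * Mx^(q+δv) * (B^(-(2*p*r)) * B^(-(r*δ))) := by
      rw [hK0]; ring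
    linarith
  have hgm : g m < 0 := hglt m hm hmC
  have hgM : 0 < g M := hggt M (lt_trans hm hmM) hCM
  constructor
  · -- existence of a zero
    obtain ⟨X₁, hX₁1, hX₁⟩ := mscb_thresh r (ε₀/M) hrpos (div_pos hε₀ hMpos)
    obtain ⟨X₂, hX₂1, hX₂⟩ := mscb_thresh (r*δ) (-(g m)/K0) (by positivity)
      (div_pos (neg_pos.mpr hgm) hK0pos)
    obtain ⟨X₃, hX₃1, hX₃⟩ := mscb_thresh (r*δ) (g M/K0) (by positivity)
      (div_pos hgM hK0pos)
    refine ⟨max X₁ (max X₂ X₃), lt_of_lt_of_le one_pos (le_trans hX₁1 (le_max_left _ _)),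
      fun B hB => ?_⟩
    have hB1 : (1:ℝ) ≤ B := le_trans hX₁1 (le_trans (le_max_left _ _) hB)
    have hB0 : 0 < B := lt_of_lt_of_le one_pos hB1
    have hBr : 0 < B^(-r) := Real.rpow_pos_of_pos hB0 _
    have hBp : 0 < B^(-(2*p*r)) := Real.rpow_pos_of_pos hB0 _
    have hwin : M * B^(-r) ≤ ε₀ := by
      have h := hX₁ B (le_trans (le_max_left _ _) hB)
      have := (lt_div_iff₀ hMpos).mp h
      nlinarith
    have hmwin : m * B^(-r) ≤ ε₀ :=
      le_trans (mul_le_mul_of_nonneg_right hmM.le hBr.le) hwin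
    have hneg : Δ (m * B^(-r)) B < 0 := by
      have habs := (abs_le.mp (key B m hB1 le_rfl hmM.le hmwin)).2
      have h2 := (lt_div_iff₀ hK0pos).mp (hX₂ B (le_trans (le_trans (le_max_left _ _) (le_max_right _ _)) hB))
      have h3 : B^(-(2*p*r)) * (g m + B^(-(r*δ)) * K0) < 0 :=
        mul_neg_of_pos_of_neg hBp (by linarith)
      nlinarith
    have hpos : 0 < Δ (M * B^(-r)) B := by
      have habs := (abs_le.mp (key B M hB1 hmM.le le_rfl hwin)).1
      have h2 := (lt_div_iff₀ hK0pos).mp (hX₃ B (le_trans (le_trans (le_max_right _ _) (le_max_right _ _)) hB))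
      have h3 : 0 < B^(-(2*p*r)) * (g M - B^(-(r*δ)) * K0) :=
        mul_pos hBp (by linarith)
      nlinarith
    have hsub : Set.Icc (m*B^(-r)) (M*B^(-r)) ⊆ Set.Ioc 0 ε₀ := fun x hx =>
      ⟨lt_of_lt_of_le (mul_pos hm hBr) hx.1, le_trans hx.2 hwin⟩
    have hcont' : ContinuousOn (fun ε => Δ ε B) (Set.Icc (m*B^(-r)) (M*B^(-r))) :=
      (hcont B hB0).mono hsub
    have hab : m*B^(-r) ≤ M*B^(-r) := mul_le_mul_of_nonneg_right hmM.le hBr.le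
    have h0mem : (0:ℝ) ∈ Set.Icc (Δ (m*B^(-r)) B) (Δ (M*B^(-r)) B) := ⟨hneg.le, hpos.le⟩
    obtain ⟨ε, hεmem, hε0⟩ := intermediate_value_Icc hab hcont' h0mem
    exact ⟨ε, hεmem, hε0⟩
  · -- localization of zeros
    intro η' hη'
    set S : Set ℝ := Set.Icc m M \ Set.Ioo (C - η') (C + η') with hSdef
    by_cases hSne : S.Nonempty
    · have hScpt : IsCompact S := isCompact_Icc.diff isOpen_Ioo
      have hgcont : ContinuousOn (fun t => |g t|) S := by
        have h1 : ContinuousOn (fun t : ℝ => t ^ (2*p)) S :=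
          ContinuousOn.rpow_const continuousOn_id
            (fun x hx => Or.inl (ne_of_gt (lt_of_lt_of_le hm hx.1.1)))
        have h2 : ContinuousOn (fun t : ℝ => t ^ q) S :=
          ContinuousOn.rpow_const continuousOn_id
            (fun x hx => Or.inl (ne_of_gt (lt_of_lt_of_le hm hx.1.1)))
        exact ((continuousOn_const.mul h1).sub (continuousOn_const.mul h2)).abs
      obtain ⟨t₀, ht₀, hmin⟩ := hScpt.exists_isMinOn hSne hgcont
      have ht₀pos : 0 < t₀ := lt_of_lt_of_le hm ht₀.1.1
      have ht₀C : t₀ ≠ C := by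
        intro h
        exact ht₀.2 (by rw [h]; exact ⟨by linarith, by linarith⟩)
      have hc : 0 < |g t₀| := by
        rcases lt_or_gt_of_ne ht₀C with h | h
        · exact abs_pos.mpr (ne_of_lt (hglt t₀ ht₀pos h))
        · exact abs_pos.mpr (ne_of_gt (hggt t₀ ht₀pos h))
      obtain ⟨X₁, hX₁1, hX₁⟩ := mscb_thresh r (ε₀/M) hrpos (div_pos hε₀ hMpos)
      obtain ⟨X₄, hX₄1, hX₄⟩ := mscb_thresh (r*δ) (|g t₀|/K0) (by positivity)
        (div_pos hc hK0pos)
      refine ⟨max X₁ X₄, lt_of_lt_of_le one_pos (le_trans hX₁1 (le_max_left _ _)),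
        fun B hB ε hεmem hzero => ?_⟩
      have hB1 : (1:ℝ) ≤ B := le_trans hX₁1 (le_trans (le_max_left _ _) hB)
      have hB0 : 0 < B := lt_of_lt_of_le one_pos hB1
      have hBr : 0 < B^(-r) := Real.rpow_pos_of_pos hB0 _
      have hBrr : 0 < B^r := Real.rpow_pos_of_pos hB0 _
      have hBp : 0 < B^(-(2*p*r)) := Real.rpow_pos_of_pos hB0 _
      have hwin : M * B^(-r) ≤ ε₀ := by
        have h := hX₁ B (le_trans (le_max_left _ _) hB)
        have := (lt_div_iff₀ hMpos).mp h
        nlinarith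
      set t : ℝ := ε * B ^ r with ht
      have hcancel : B^(-r) * B^r = 1 := by
        rw [← Real.rpow_add hB0]; simp
      have hεt : ε = t * B^(-r) := by
        have : t * B^(-r) = ε * (B^(-r) * B^r) := by rw [ht]; ring
        rw [this, hcancel, mul_one]
      have hmt : m ≤ t := by
        have h := mul_le_mul_of_nonneg_right hεmem.1 hBrr.le
        rwa [mul_assoc, hcancel, mul_one] at h
      have htM : t ≤ M := by
        have h := mul_le_mul_of_nonneg_right hεmem.2 hBrr.le
        rwa [mul_assoc, hcancel, mul_one] at h
      have hεε₀ : t * B^(-r) ≤ ε₀ := by rw [← hεt]; exact le_trans hεmem.2 hwin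
      have habs := key B t hB1 hmt htM hεε₀
      rw [← hεt, hzero] at habs
      have h5 : B^(-(2*p*r)) * |g t| ≤ K0 * (B^(-(2*p*r)) * B^(-(r*δ))) := by
        calc B^(-(2*p*r)) * |g t| = |B^(-(2*p*r)) * g t| := by
              rw [abs_mul, abs_of_pos hBp]
        _ = |0 - B^(-(2*p*r)) * g t| := by rw [zero_sub, abs_neg]
        _ ≤ _ := habs
      have h6 : |g t| ≤ K0 * B^(-(r*δ)) := by
        have h5' : B^(-(2*p*r)) * |g t| ≤ B^(-(2*p*r)) * (K0 * B^(-(r*δ))) := by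
          nlinarith
        exact le_of_mul_le_mul_left h5' hBp
      have h7 : K0 * B^(-(r*δ)) < |g t₀| := by
        have h := (lt_div_iff₀ hK0pos).mp (hX₄ B (le_trans (le_max_right _ _) hB))
        linarith
      by_contra hcon
      push_neg at hcon
      have htS : t ∈ S := by
        refine ⟨⟨hmt, htM⟩, fun hIoo => ?_⟩
        have : |t - C| < η' := abs_lt.mpr ⟨by linarith [hIoo.1], by linarith [hIoo.2]⟩
        linarith
      have h8 : |g t₀| ≤ |g t| := hmin htS
      linarith
    · refine ⟨1, one_pos, fun B hB ε hεmem hzero => ?_⟩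
      have hB0 : (0:ℝ) < B := lt_of_lt_of_le one_pos hB
      have hBr : 0 < B^(-r) := Real.rpow_pos_of_pos hB0 _
      have hBrr : 0 < B^r := Real.rpow_pos_of_pos hB0 _
      set t : ℝ := ε * B ^ r with ht
      have hcancel : B^(-r) * B^r = 1 := by
        rw [← Real.rpow_add hB0]; simp
      have hmt : m ≤ t := by
        have h := mul_le_mul_of_nonneg_right hεmem.1 hBrr.le
        rwa [mul_assoc, hcancel, mul_one] at h
      have htM : t ≤ M := by
        have h := mul_le_mul_of_nonneg_right hεmem.2 hBrr.le
        rwa [mul_assoc, hcancel, mul_one] at h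
      have htIoo : t ∈ Set.Ioo (C - η') (C + η') := by
        by_contra h
        exact hSne ⟨t, ⟨hmt, htM⟩, h⟩
      exact le_of_lt (abs_lt.mpr ⟨by linarith [htIoo.1], by linarith [htIoo.2]⟩)
end

section
/- Let D > 0, K > 0, p ≥ 1, 0 ≤ q < 2p, δ_b > 0, δ_v > 0, L_b > 0, L_v > 0, ε₀ > 0 be reals, set r = 1/(2p−q) and C = (K/D)^{1/(2p−q)}. Let Δ : (0,∞) × (0,∞) → ℝ satisfy |Δ(ε,B) − D·ε^{2p} + K·ε^q/B| ≤ L_b·ε^{2p+δ_b} + L_v·ε^{q+δ_v}/B for all 0 < ε ≤ ε₀ and all B > 0. Then for any reals 0 < a ≤ b: (i) if b < C, there exists B₃ > 0 such that Δ(x·B^{−r}, B) < 0 for all B ≥ B₃ and all x ∈ [a,b]; and (ii) if a > C, there exists B₃ > 0 such that Δ(x·B^{−r}, B) > 0 for all B ≥ B₃ and all x ∈ [a,b]. -/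
open Filter Real Set

set_option maxHeartbeats 2000000 in
/-- Sign-change statement in the rescaled perturbative window: below the root
`C = (K/D)^{1/(2p−q)}` the MSE difference is eventually negative on compact
rescaled windows, above it eventually positive. -/
theorem master_sign_in_window
    (D K p q δb δv Lb Lv ε₀ : ℝ)
    (hD : 0 < D) (hK : 0 < K) (hp : 1 ≤ p) (hq0 : 0 ≤ q) (hq : q < 2 * p)
    (hδb : 0 < δb) (hδv : 0 < δv) (hLb : 0 < Lb) (hLv : 0 < Lv) (hε₀ : 0 < ε₀)
    (Δ : ℝ → ℝ → ℝ)
    (hbound : ∀ ε B : ℝ, 0 < ε → ε ≤ ε₀ → 0 < B →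
      |Δ ε B - D * ε ^ (2 * p) + K * ε ^ q / B|
        ≤ Lb * ε ^ (2 * p + δb) + Lv * ε ^ (q + δv) / B)
    (a b : ℝ) (ha : 0 < a) (hab : a ≤ b) :
    (b < (K / D) ^ (1 / (2 * p - q)) →
      ∃ B₃ > (0 : ℝ), ∀ B ≥ B₃, ∀ x ∈ Set.Icc a b,
        Δ (x * B ^ (-(1 / (2 * p - q)))) B < 0) ∧
    ((K / D) ^ (1 / (2 * p - q)) < a →
      ∃ B₃ > (0 : ℝ), ∀ B ≥ B₃, ∀ x ∈ Set.Icc a b,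
        0 < Δ (x * B ^ (-(1 / (2 * p - q)))) B) := by
  have hb0 : 0 < b := lt_of_lt_of_le ha hab
  have hepos : 0 < 2 * p - q := by linarith
  obtain ⟨r, hrdef⟩ : ∃ r : ℝ, r = 1 / (2 * p - q) := ⟨_, rfl⟩
  rw [← hrdef]
  have hrpos : 0 < r := by rw [hrdef]; positivity
  have hre : r * (2 * p - q) = 1 := by
    rw [hrdef]; field_simp
  have hKD : 0 < K / D := div_pos hK hD
  -- key estimate
  have key : ∀ B : ℝ, 0 < B → b * B ^ (-r) ≤ ε₀ → ∀ x ∈ Set.Icc a b,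
      |Δ (x * B ^ (-r)) B - (D * x ^ (2*p) - K * x ^ q) * B ^ (-(2*p*r))|
        ≤ (Lb * b ^ (2*p+δb) * B ^ (-(δb*r)) + Lv * b ^ (q+δv) * B ^ (-(δv*r)))
            * B ^ (-(2*p*r)) := by
    intro B hB hBε x hx
    obtain ⟨hax, hxb⟩ := hx
    have hx0 : 0 < x := lt_of_lt_of_le ha hax
    have hBr : 0 < B ^ (-r) := Real.rpow_pos_of_pos hB _
    set ε := x * B ^ (-r) with hεdef
    have hε : 0 < ε := mul_pos hx0 hBr
    have hε' : ε ≤ ε₀ :=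
      le_trans (mul_le_mul_of_nonneg_right hxb hBr.le) hBε
    have hB0 := hbound ε B hε hε' hB
    set T := B ^ (-(2*p*r)) with hTdef
    have hT : 0 < T := Real.rpow_pos_of_pos hB _
    have hpow : ∀ s : ℝ, ε ^ s = x ^ s * B ^ (-(r * s)) := by
      intro s
      rw [hεdef, Real.mul_rpow hx0.le hBr.le, ← Real.rpow_mul hB.le, neg_mul]
    have hBinv : (B : ℝ)⁻¹ = B ^ (-(1:ℝ)) := by
      rw [Real.rpow_neg_one]
    have e1 : ε ^ (2*p) = x ^ (2*p) * T := by
      rw [hpow, hTdef]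
      congr 2
      ring
    have e2 : ε ^ q / B = x ^ q * T := by
      rw [hpow, hTdef, div_eq_mul_inv, hBinv, mul_assoc, ← Real.rpow_add hB]
      congr 2
      linear_combination hre
    have e3 : ε ^ (2*p+δb) = x ^ (2*p+δb) * (B ^ (-(δb*r)) * T) := by
      rw [hpow, hTdef, ← Real.rpow_add hB]
      congr 2
      ring
    have e4 : ε ^ (q+δv) / B = x ^ (q+δv) * (B ^ (-(δv*r)) * T) := by
      rw [hpow, hTdef, div_eq_mul_inv, hBinv, mul_assoc, ← Real.rpow_add hB,
        ← Real.rpow_add hB]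
      congr 2
      linear_combination hre
    have hrw : Δ ε B - D * ε ^ (2*p) + K * ε ^ q / B
        = Δ ε B - (D * x ^ (2*p) - K * x ^ q) * T := by
      rw [mul_div_assoc, e1, e2]; ring
    have hxb1 : x ^ (2*p+δb) ≤ b ^ (2*p+δb) :=
      Real.rpow_le_rpow hx0.le hxb (by linarith)
    have hxb2 : x ^ (q+δv) ≤ b ^ (q+δv) :=
      Real.rpow_le_rpow hx0.le hxb (by linarith)
    have h1 : 0 < B ^ (-(δb*r)) := Real.rpow_pos_of_pos hB _
    have h2 : 0 < B ^ (-(δv*r)) := Real.rpow_pos_of_pos hB _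
    have k1 : x ^ (2*p+δb) * (B ^ (-(δb*r)) * T) ≤ b ^ (2*p+δb) * (B ^ (-(δb*r)) * T) :=
      mul_le_mul_of_nonneg_right hxb1 (by positivity)
    have k2 : x ^ (q+δv) * (B ^ (-(δv*r)) * T) ≤ b ^ (q+δv) * (B ^ (-(δv*r)) * T) :=
      mul_le_mul_of_nonneg_right hxb2 (by positivity)
    calc |Δ ε B - (D * x ^ (2*p) - K * x ^ q) * T|
        = |Δ ε B - D * ε ^ (2*p) + K * ε ^ q / B| := by rw [hrw]
      _ ≤ Lb * ε ^ (2*p+δb) + Lv * ε ^ (q+δv) / B := hB0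
      _ = Lb * (x ^ (2*p+δb) * (B ^ (-(δb*r)) * T))
          + Lv * (x ^ (q+δv) * (B ^ (-(δv*r)) * T)) := by
          rw [mul_div_assoc, e3, e4]
      _ ≤ (Lb * b ^ (2*p+δb) * B ^ (-(δb*r)) + Lv * b ^ (q+δv) * B ^ (-(δv*r))) * T := by
          nlinarith [mul_le_mul_of_nonneg_left k1 hLb.le,
            mul_le_mul_of_nonneg_left k2 hLv.le]
  -- tendsto facts
  have t1 : Tendsto (fun B : ℝ => b * B ^ (-r)) atTop (nhds 0) := by
    simpa using (tendsto_rpow_neg_atTop hrpos).const_mul b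
  have ev1 : ∀ᶠ B in atTop, b * B ^ (-r) ≤ ε₀ :=
    (t1.eventually_lt_const hε₀).mono fun B h => h.le
  have splitpow : ∀ x : ℝ, 0 < x → x ^ (2*p) = x ^ q * x ^ (2*p - q) := by
    intro x hx0
    rw [← Real.rpow_add hx0]
    congr 1
    ring
  have rpow_e : ((K / D) ^ r) ^ (2 * p - q) = K / D := by
    rw [← Real.rpow_mul hKD.le, hre, Real.rpow_one]
  constructor
  · intro hbC
    have hbe : b ^ (2*p - q) < K / D := by
      have h := Real.rpow_lt_rpow hb0.le hbC hepos
      rwa [rpow_e] at h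
    have hc : D * b ^ (2*p - q) - K < 0 := by
      have := (lt_div_iff₀' hD).mp hbe
      linarith
    obtain ⟨m, hmdef⟩ : ∃ m : ℝ, m = a ^ q * (K - D * b ^ (2*p - q)) := ⟨_, rfl⟩
    have hm : 0 < m := by
      rw [hmdef]
      exact mul_pos (Real.rpow_pos_of_pos ha q) (by linarith)
    have hf : ∀ x ∈ Set.Icc a b, D * x ^ (2*p) - K * x ^ q ≤ -m := by
      intro x hx
      obtain ⟨hax, hxb⟩ := hx
      have hx0 : 0 < x := lt_of_lt_of_le ha hax
      have hxq : a ^ q ≤ x ^ q := Real.rpow_le_rpow ha.le hax hq0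
      have hxe : x ^ (2*p - q) ≤ b ^ (2*p - q) :=
        Real.rpow_le_rpow hx0.le hxb hepos.le
      have hxq0 : 0 < x ^ q := Real.rpow_pos_of_pos hx0 _
      have hs := splitpow x hx0
      have step1 : x ^ q * (D * x ^ (2*p-q) - K) ≤ x ^ q * (D * b ^ (2*p-q) - K) := by
        apply mul_le_mul_of_nonneg_left _ hxq0.le
        nlinarith
      have step2 : x ^ q * (D * b ^ (2*p-q) - K) ≤ a ^ q * (D * b ^ (2*p-q) - K) :=
        mul_le_mul_of_nonpos_right hxq hc.le
      have : D * x ^ (2*p) - K * x ^ q = x ^ q * (D * x ^ (2*p-q) - K) := by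
        rw [hs]; ring
      rw [this, hmdef]
      nlinarith
    have t2 : Tendsto (fun B : ℝ =>
        Lb * b ^ (2*p+δb) * B ^ (-(δb*r)) + Lv * b ^ (q+δv) * B ^ (-(δv*r)))
        atTop (nhds 0) := by
      have g1 := (tendsto_rpow_neg_atTop (show 0 < δb*r by positivity)).const_mul
        (Lb * b ^ (2*p+δb))
      have g2 := (tendsto_rpow_neg_atTop (show 0 < δv*r by positivity)).const_mul
        (Lv * b ^ (q+δv))
      simpa using g1.add g2
    have ev2 : ∀ᶠ B in atTop,
        Lb * b ^ (2*p+δb) * B ^ (-(δb*r)) + Lv * b ^ (q+δv) * B ^ (-(δv*r)) < m :=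
      t2.eventually_lt_const hm
    have ev : ∀ᶠ B in atTop, (1:ℝ) ≤ B ∧ b * B ^ (-r) ≤ ε₀ ∧
        Lb * b ^ (2*p+δb) * B ^ (-(δb*r)) + Lv * b ^ (q+δv) * B ^ (-(δv*r)) < m :=
      (eventually_ge_atTop 1).and (ev1.and ev2)
    rw [eventually_atTop] at ev
    obtain ⟨B₃, hB₃⟩ := ev
    refine ⟨max B₃ 1, lt_of_lt_of_le one_pos (le_max_right _ _), ?_⟩
    intro B hB x hx
    obtain ⟨hB1, hBε, herr⟩ := hB₃ B (le_trans (le_max_left _ _) hB)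
    have hBpos : 0 < B := lt_of_lt_of_le one_pos hB1
    have hT : 0 < B ^ (-(2*p*r)) := Real.rpow_pos_of_pos hBpos _
    have hk := key B hBpos hBε x hx
    have hfx := hf x hx
    rw [abs_le] at hk
    have e1 : (D * x ^ (2*p) - K * x ^ q) * B ^ (-(2*p*r)) ≤ (-m) * B ^ (-(2*p*r)) :=
      mul_le_mul_of_nonneg_right hfx hT.le
    have e2 : (Lb * b ^ (2*p+δb) * B ^ (-(δb*r)) + Lv * b ^ (q+δv) * B ^ (-(δv*r)))
        * B ^ (-(2*p*r)) < m * B ^ (-(2*p*r)) :=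
      mul_lt_mul_of_pos_right herr hT
    linarith [hk.2]
  · intro haC
    have hae : K / D < a ^ (2*p - q) := by
      have h := Real.rpow_lt_rpow (Real.rpow_nonneg hKD.le _) haC hepos
      rwa [rpow_e] at h
    have hc : 0 < D * a ^ (2*p - q) - K := by
      have := (div_lt_iff₀' hD).mp hae
      linarith
    obtain ⟨m, hmdef⟩ : ∃ m : ℝ, m = a ^ q * (D * a ^ (2*p - q) - K) := ⟨_, rfl⟩
    have hm : 0 < m := by
      rw [hmdef]
      exact mul_pos (Real.rpow_pos_of_pos ha q) (by linarith)
    have hf : ∀ x ∈ Set.Icc a b, m ≤ D * x ^ (2*p) - K * x ^ q := by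
      intro x hx
      obtain ⟨hax, hxb⟩ := hx
      have hx0 : 0 < x := lt_of_lt_of_le ha hax
      have hxq : a ^ q ≤ x ^ q := Real.rpow_le_rpow ha.le hax hq0
      have hxe : a ^ (2*p - q) ≤ x ^ (2*p - q) :=
        Real.rpow_le_rpow ha.le hax hepos.le
      have hxq0 : 0 < x ^ q := Real.rpow_pos_of_pos hx0 _
      have hs := splitpow x hx0
      have step1 : x ^ q * (D * a ^ (2*p-q) - K) ≤ x ^ q * (D * x ^ (2*p-q) - K) := by
        apply mul_le_mul_of_nonneg_left _ hxq0.le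
        nlinarith
      have step2 : a ^ q * (D * a ^ (2*p-q) - K) ≤ x ^ q * (D * a ^ (2*p-q) - K) :=
        mul_le_mul_of_nonneg_right hxq hc.le
      have heq : D * x ^ (2*p) - K * x ^ q = x ^ q * (D * x ^ (2*p-q) - K) := by
        rw [hs]; ring
      rw [heq, hmdef]
      nlinarith
    have t2 : Tendsto (fun B : ℝ =>
        Lb * b ^ (2*p+δb) * B ^ (-(δb*r)) + Lv * b ^ (q+δv) * B ^ (-(δv*r)))
        atTop (nhds 0) := by
      have g1 := (tendsto_rpow_neg_atTop (show 0 < δb*r by positivity)).const_mul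
        (Lb * b ^ (2*p+δb))
      have g2 := (tendsto_rpow_neg_atTop (show 0 < δv*r by positivity)).const_mul
        (Lv * b ^ (q+δv))
      simpa using g1.add g2
    have ev2 : ∀ᶠ B in atTop,
        Lb * b ^ (2*p+δb) * B ^ (-(δb*r)) + Lv * b ^ (q+δv) * B ^ (-(δv*r)) < m :=
      t2.eventually_lt_const hm
    have ev : ∀ᶠ B in atTop, (1:ℝ) ≤ B ∧ b * B ^ (-r) ≤ ε₀ ∧
        Lb * b ^ (2*p+δb) * B ^ (-(δb*r)) + Lv * b ^ (q+δv) * B ^ (-(δv*r)) < m :=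
      (eventually_ge_atTop 1).and (ev1.and ev2)
    rw [eventually_atTop] at ev
    obtain ⟨B₃, hB₃⟩ := ev
    refine ⟨max B₃ 1, lt_of_lt_of_le one_pos (le_max_right _ _), ?_⟩
    intro B hB x hx
    obtain ⟨hB1, hBε, herr⟩ := hB₃ B (le_trans (le_max_left _ _) hB)
    have hBpos : 0 < B := lt_of_lt_of_le one_pos hB1
    have hT : 0 < B ^ (-(2*p*r)) := Real.rpow_pos_of_pos hBpos _
    have hk := key B hBpos hBε x hx
    have hfx := hf x hx
    rw [abs_le] at hk
    have e1 : m * B ^ (-(2*p*r)) ≤ (D * x ^ (2*p) - K * x ^ q) * B ^ (-(2*p*r)) :=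
      mul_le_mul_of_nonneg_right hfx hT.le
    have e2 : (Lb * b ^ (2*p+δb) * B ^ (-(δb*r)) + Lv * b ^ (q+δv) * B ^ (-(δv*r)))
        * B ^ (-(2*p*r)) < m * B ^ (-(2*p*r)) :=
      mul_lt_mul_of_pos_right herr hT
    linarith [hk.1]
end

section
/- Let D > 0, K > 0, p ≥ 1, δ_b > 0, δ_v > 0, L_b > 0, L_v > 0, ε₀ > 0 be reals, and let Δ : (0,∞) × (0,∞) → ℝ satisfy |Δ(ε,B) − (D − K/B)·ε^{2p}| ≤ L_b·ε^{2p+δ_b} + L_v·ε^{2p+δ_v}/B for all 0 < ε ≤ ε₀ and all B > 0 (the critical case q = 2p). Then: (i) if B > K/D, there exists ε₁ > 0 such that Δ(ε,B) > 0 for all 0 < ε < ε₁; and (ii) if 0 < B < K/D, there exists ε₁ > 0 such that Δ(ε,B) < 0 for all 0 < ε < ε₁. -/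
lemma aux_small_rpow (c L δ : ℝ) (hc : 0 < c) (hL : 0 < L) (hδ : 0 < δ) :
    ∃ η > (0:ℝ), ∀ ε : ℝ, 0 < ε → ε < η → L * ε ^ δ < c := by
  refine ⟨(c / L) ^ (1 / δ), Real.rpow_pos_of_pos (div_pos hc hL) _, ?_⟩
  intro ε hε hlt
  have h1 : ε ^ δ < ((c / L) ^ (1 / δ)) ^ δ := Real.rpow_lt_rpow hε.le hlt hδ
  have h2 : ((c / L) ^ (1 / δ)) ^ δ = c / L := by
    rw [← Real.rpow_mul (div_pos hc hL).le, one_div_mul_cancel hδ.ne', Real.rpow_one]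
  rw [h2] at h1
  have := mul_lt_mul_of_pos_left h1 hL
  calc L * ε ^ δ < L * (c / L) := this
    _ = c := by field_simp

lemma aux_core (D K p δb δv Lb Lv ε₀ : ℝ)
    (hδb : 0 < δb) (hδv : 0 < δv) (hLb : 0 < Lb) (hLv : 0 < Lv) (hε₀ : 0 < ε₀)
    (B c : ℝ) (hB : 0 < B) (hc : 0 < c) :
    ∃ ε₁ > (0:ℝ), ∀ ε : ℝ, 0 < ε → ε < ε₁ → ε ≤ ε₀ ∧
      Lb * ε ^ (2 * p + δb) + Lv * ε ^ (2 * p + δv) / B < c * ε ^ (2 * p) := by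
  obtain ⟨η₁, hη₁, h₁⟩ := aux_small_rpow (c / 2) Lb δb (by linarith) hLb hδb
  obtain ⟨η₂, hη₂, h₂⟩ := aux_small_rpow (c / 2) (Lv / B) δv (by linarith)
    (div_pos hLv hB) hδv
  refine ⟨min ε₀ (min η₁ η₂), by positivity, ?_⟩
  intro ε hε hlt
  have hε0 : ε ≤ ε₀ := le_of_lt (lt_of_lt_of_le hlt (min_le_left _ _))
  refine ⟨hε0, ?_⟩
  have hlt₁ : ε < η₁ := lt_of_lt_of_le hlt ((min_le_right _ _).trans (min_le_left _ _))
  have hlt₂ : ε < η₂ := lt_of_lt_of_le hlt ((min_le_right _ _).trans (min_le_right _ _))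
  have hb := h₁ ε hε hlt₁
  have hv := h₂ ε hε hlt₂
  have hpow : (0:ℝ) < ε ^ (2 * p) := Real.rpow_pos_of_pos hε _
  have e1 : ε ^ (2 * p + δb) = ε ^ (2 * p) * ε ^ δb := Real.rpow_add hε _ _
  have e2 : ε ^ (2 * p + δv) = ε ^ (2 * p) * ε ^ δv := Real.rpow_add hε _ _
  rw [e1, e2]
  have : Lb * (ε ^ (2 * p) * ε ^ δb) + Lv * (ε ^ (2 * p) * ε ^ δv) / B
      = (Lb * ε ^ δb + Lv / B * ε ^ δv) * ε ^ (2 * p) := by ring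
  rw [this]
  have hsum : Lb * ε ^ δb + Lv / B * ε ^ δv < c := by linarith
  exact mul_lt_mul_of_pos_right hsum hpow

/-- Critical case `q = 2p`: the local sign of the MSE difference is governed
by the budget threshold `B* = K/D`. Above the threshold ZNE helps for all
sufficiently small `ε`; below it ZNE harms for all sufficiently small `ε`. -/
theorem master_critical_budget_threshold
    (D K p δb δv Lb Lv ε₀ : ℝ)
    (hD : 0 < D) (hK : 0 < K) (hp : 1 ≤ p)
    (hδb : 0 < δb) (hδv : 0 < δv) (hLb : 0 < Lb) (hLv : 0 < Lv) (hε₀ : 0 < ε₀)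
    (Δ : ℝ → ℝ → ℝ)
    (hbound : ∀ ε B : ℝ, 0 < ε → ε ≤ ε₀ → 0 < B →
      |Δ ε B - (D - K / B) * ε ^ (2 * p)|
        ≤ Lb * ε ^ (2 * p + δb) + Lv * ε ^ (2 * p + δv) / B) :
    (∀ B : ℝ, K / D < B →
      ∃ ε₁ > (0 : ℝ), ∀ ε : ℝ, 0 < ε → ε < ε₁ → 0 < Δ ε B) ∧
    (∀ B : ℝ, 0 < B → B < K / D →
      ∃ ε₁ > (0 : ℝ), ∀ ε : ℝ, 0 < ε → ε < ε₁ → Δ ε B < 0) := by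
  constructor
  · intro B hB
    have hB0 : 0 < B := lt_trans (div_pos hK hD) hB
    have hc : 0 < D - K / B := by
      have : K / B < D := (div_lt_iff₀ hB0).mpr (by
        have := (div_lt_iff₀ hD).mp hB
        nlinarith)
      linarith
    obtain ⟨ε₁, hε₁, h⟩ := aux_core D K p δb δv Lb Lv ε₀ hδb hδv hLb hLv hε₀
      B (D - K / B) hB0 hc
    refine ⟨ε₁, hε₁, ?_⟩
    intro ε hε hlt
    obtain ⟨hε0, herr⟩ := h ε hε hlt
    have hb := hbound ε B hε hε0 hB0
    have := abs_le.mp hb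
    linarith [this.1, this.2]
  · intro B hB0 hB
    have hc : 0 < K / B - D := by
      have : D < K / B := by
        rw [lt_div_iff₀ hB0]
        have := (lt_div_iff₀ hD).mp hB
        nlinarith
      linarith
    obtain ⟨ε₁, hε₁, h⟩ := aux_core D K p δb δv Lb Lv ε₀ hδb hδv hLb hLv hε₀
      B (K / B - D) hB0 hc
    refine ⟨ε₁, hε₁, ?_⟩
    intro ε hε hlt
    obtain ⟨hε0, herr⟩ := h ε hε hlt
    have hb := hbound ε B hε hε0 hB0
    have h' := abs_le.mp hb
    have hpow : (0:ℝ) < ε ^ (2 * p) := Real.rpow_pos_of_pos hε _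
    nlinarith [h'.1, h'.2]
end

section
/- Let D > 0, K > 0, p ≥ 1, 0 ≤ q < 2p, δ_b > 0, δ_v > 0, L_b > 0, L_v > 0, ε₀ > 0 be reals, and set r = 1/(2p−q). Let Δ : (0,∞) × (0,∞) → ℝ satisfy |Δ(ε,B) − D·ε^{2p} + K·ε^q/B| ≤ L_b·ε^{2p+δ_b} + L_v·ε^{q+δ_v}/B for all 0 < ε ≤ ε₀ and all B > 0. Let (B_n) and (ε_n) be sequences of positive reals with B_n → ∞, ε_n → 0, and ε_n·B_n^r → 0. Then Δ(ε_n, B_n) < 0 for all sufficiently large n. -/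
open Filter

/-- Local optimality of the boundary scale: below the scale `B^{−1/(2p−q)}`
ZNE necessarily harms. If `B_n → ∞`, `ε_n → 0`, and `ε_n B_n^r → 0` with
`r = 1/(2p−q)`, then `Δ(ε_n, B_n) < 0` for all sufficiently large `n`. -/
theorem local_optimality_of_boundary_scale
    (D K p q δb δv Lb Lv ε₀ : ℝ)
    (hD : 0 < D) (hK : 0 < K) (hp : 1 ≤ p) (hq0 : 0 ≤ q) (hq : q < 2 * p)
    (hδb : 0 < δb) (hδv : 0 < δv) (hLb : 0 < Lb) (hLv : 0 < Lv) (hε₀ : 0 < ε₀)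
    (Δ : ℝ → ℝ → ℝ)
    (hbound : ∀ ε B : ℝ, 0 < ε → ε ≤ ε₀ → 0 < B →
      |Δ ε B - D * ε ^ (2 * p) + K * ε ^ q / B|
        ≤ Lb * ε ^ (2 * p + δb) + Lv * ε ^ (q + δv) / B)
    (B : ℕ → ℝ) (ε : ℕ → ℝ)
    (hBpos : ∀ n, 0 < B n) (hεpos : ∀ n, 0 < ε n)
    (hBtop : Tendsto B atTop atTop)
    (hε0 : Tendsto ε atTop (nhds 0))
    (hscale : Tendsto (fun n => ε n * (B n) ^ (1 / (2 * p - q))) atTop (nhds 0)) :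
    ∀ᶠ n in atTop, Δ (ε n) (B n) < 0 := by
  have hs0 : (0:ℝ) < 2 * p - q := by linarith
  -- ε^δv → 0
  have h1 : Tendsto (fun n => Lv * ε n ^ δv) atTop (nhds 0) := by
    have h := (hε0.rpow_const (Or.inr hδv.le)).const_mul Lv
    simpa [Real.zero_rpow hδv.ne'] using h
  -- ε^(2p-q) * B → 0
  have h2 : Tendsto (fun n => ε n ^ (2 * p - q) * B n * (D + Lb)) atTop (nhds 0) := by
    have h := hscale.rpow_const (Or.inr hs0.le)
    rw [Real.zero_rpow hs0.ne'] at h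
    have h' : Tendsto (fun n => ε n ^ (2 * p - q) * B n) atTop (nhds 0) := by
      refine h.congr (fun n => ?_)
      rw [Real.mul_rpow (hεpos n).le (Real.rpow_nonneg (hBpos n).le _),
        ← Real.rpow_mul (hBpos n).le, one_div_mul_cancel hs0.ne', Real.rpow_one]
    simpa using h'.mul_const (D + Lb)
  have hA : ∀ᶠ n in atTop, ε n ^ (2 * p - q) * B n * (D + Lb) < K / 2 :=
    h2.eventually_lt_const (by linarith)
  have hV : ∀ᶠ n in atTop, Lv * ε n ^ δv < K / 2 :=
    h1.eventually_lt_const (by linarith)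
  have hE : ∀ᶠ n in atTop, ε n < min ε₀ 1 :=
    hε0.eventually_lt_const (lt_min hε₀ one_pos)
  filter_upwards [hA, hV, hE] with n hAn hVn hEn
  set e := ε n with he_def
  set b := B n with hb_def
  have he : 0 < e := hεpos n
  have hb : 0 < b := hBpos n
  have he1 : e ≤ 1 := le_of_lt (lt_of_lt_of_le hEn (min_le_right _ _))
  have heε₀ : e ≤ ε₀ := le_of_lt (lt_of_lt_of_le hEn (min_le_left _ _))
  have habs := hbound e b he heε₀ hb
  have hΔle : Δ e b ≤ D * e ^ (2 * p) - K * e ^ q / b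
      + (Lb * e ^ (2 * p + δb) + Lv * e ^ (q + δv) / b) := by
    have := (abs_le.mp habs).2
    linarith
  -- rpow identities
  have h2p : e ^ (2 * p) = e ^ (2 * p - q) * e ^ q := by
    rw [← Real.rpow_add he]; ring_nf
  have h2pb : e ^ (2 * p + δb) = e ^ (2 * p - q) * e ^ δb * e ^ q := by
    rw [← Real.rpow_add he, ← Real.rpow_add he]; ring_nf
  have hqv : e ^ (q + δv) = e ^ δv * e ^ q := by
    rw [← Real.rpow_add he]; ring_nf
  have heδb : e ^ δb ≤ 1 := Real.rpow_le_one he.le he1 hδb.le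
  have hes : 0 < e ^ (2 * p - q) := Real.rpow_pos_of_pos he _
  have heq : 0 < e ^ q := Real.rpow_pos_of_pos he q
  have key : b * (D * e ^ (2 * p - q) + Lb * (e ^ (2 * p - q) * e ^ δb))
      + Lv * e ^ δv < K := by
    have h3 : Lb * (e ^ (2 * p - q) * e ^ δb) ≤ Lb * e ^ (2 * p - q) :=
      mul_le_mul_of_nonneg_left (mul_le_of_le_one_right hes.le heδb) hLb.le
    nlinarith [mul_le_mul_of_nonneg_left h3 hb.le]
  have hfinal : D * e ^ (2 * p) - K * e ^ q / b
      + (Lb * e ^ (2 * p + δb) + Lv * e ^ (q + δv) / b) < 0 := by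
    have hrw : D * e ^ (2 * p) - K * e ^ q / b
        + (Lb * e ^ (2 * p + δb) + Lv * e ^ (q + δv) / b)
        = (b * (D * e ^ (2 * p - q) + Lb * (e ^ (2 * p - q) * e ^ δb))
            + Lv * e ^ δv - K) * (e ^ q / b) := by
      rw [h2p, h2pb, hqv]; field_simp; ring
    rw [hrw]
    exact mul_neg_of_neg_of_pos (by linarith) (by positivity)
  linarith
end

section
/- Let D > 0, K > 0, p ≥ 1, 0 ≤ q < 2p, δ_b > 0, δ_v > 0, L_b > 0, L_v > 0, ε₀ > 0 be reals, set r = 1/(2p−q), C = (K/D)^{1/(2p−q)}, and η = min(δ_b, δ_v)/(2p−q). Let Δ : (0,∞) × (0,∞) → ℝ satisfy |Δ(ε,B) − D·ε^{2p} + K·ε^q/B| ≤ L_b·ε^{2p+δ_b} + L_v·ε^{q+δ_v}/B for all 0 < ε ≤ ε₀ and all B > 0. Fix 0 < m < C < M. Then there exist constants B₄ > 0 and M′ > 0 such that for every B ≥ B₄, every zero ε of Δ(·,B) in the window [m·B^{−r}, M·B^{−r}] satisfies |ε·B^r − C| ≤ M′·B^{−η}. -/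
/-!
Put `s = 2p - q`, `r = 1/s`, `C = (K/D)^r` and `x = ε B^r`. Since `qr + 1 = 2pr`, multiplying the
remainder bound at a zero of `Δ(·, B)` by `B^{2pr}` gives
`|D x^{2p} - K x^q| ≤ (Lb x^{2p+δb} + Lv x^{q+δv}) B^{-r min(δb, δv)}`, where `x ∈ [m, M]` and
`ε ≤ ε₀` once `B ≥ (M/ε₀)^s`. The left side is `D x^q |x^s - C^s|`, and the mean value theorem for
`t ↦ t^s` on `[m, M]` bounds it below by a constant multiple of `|x - C|`.
-/

open Real Set

namespace Real

lemma min_rpow_le_rpow_of_mem_Icc {m M x : ℝ} (hm : 0 < m) (hx : x ∈ Icc m M) (t : ℝ) :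
    min (m ^ t) (M ^ t) ≤ x ^ t := by
  rcases le_total 0 t with ht | ht
  · exact (min_le_left _ _).trans (rpow_le_rpow hm.le hx.1 ht)
  · exact (min_le_right _ _).trans (rpow_le_rpow_of_nonpos (hm.trans_le hx.1) hx.2 ht)

lemma rpow_le_max_rpow_of_mem_Icc {m M x : ℝ} (hm : 0 < m) (hx : x ∈ Icc m M) (t : ℝ) :
    x ^ t ≤ max (m ^ t) (M ^ t) := by
  rcases le_total 0 t with ht | ht
  · exact (rpow_le_rpow (hm.trans_le hx.1).le hx.2 ht).trans (le_max_right _ _)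
  · exact (rpow_le_rpow_of_nonpos hm hx.1 ht).trans (le_max_left _ _)

lemma mul_abs_sub_le_abs_rpow_sub_rpow {m M a b s : ℝ} (hm : 0 < m) (hs : 0 < s)
    (ha : a ∈ Icc m M) (hb : b ∈ Icc m M) :
    s * min (m ^ (s - 1)) (M ^ (s - 1)) * |b - a| ≤ |b ^ s - a ^ s| := by
  wlog hab : a ≤ b generalizing a b
  · rw [abs_sub_comm b, abs_sub_comm (b ^ s)]
    exact this hb ha (le_of_not_ge hab)
  have hpow : a ^ s ≤ b ^ s := rpow_le_rpow (hm.trans_le ha.1).le hab hs.le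
  rw [abs_of_nonneg (sub_nonneg.2 hab), abs_of_nonneg (sub_nonneg.2 hpow)]
  refine (convex_Icc m M).mul_sub_le_image_sub_of_le_deriv (f := fun x => x ^ s)
    (continuousOn_id.rpow_const fun _ _ => Or.inr hs.le) ?_ ?_ a ha b hb hab
    <;> rw [interior_Icc]
  · exact fun x hx =>
      (differentiableAt_rpow_const_of_ne s (hm.trans hx.1).ne').differentiableWithinAt
  intro x hx
  rw [deriv_rpow_const]
  exact mul_le_mul_of_nonneg_left (min_rpow_le_rpow_of_mem_Icc hm (Ioo_subset_Icc_self hx) _) hs.le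

end Real

lemma mul_abs_sub_root_le_abs_leading_balance {D K a q m M x : ℝ} (hD : 0 < D) (hK : 0 ≤ K)
    (hqa : q < a) (hm : 0 < m) (hx : x ∈ Icc m M) (hC : (K / D) ^ (1 / (a - q)) ∈ Icc m M) :
    D * min (m ^ q) (M ^ q) * ((a - q) * min (m ^ (a - q - 1)) (M ^ (a - q - 1)))
        * |x - (K / D) ^ (1 / (a - q))| ≤ |D * x ^ a - K * x ^ q| := by
  set s := a - q
  set C := (K / D) ^ (1 / s)
  have hs : 0 < s := sub_pos.2 hqa
  have hx0 : 0 < x := hm.trans_le hx.1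
  have hCs : D * C ^ s = K := by
    rw [show C = (K / D) ^ s⁻¹ from one_div s ▸ rfl, rpow_inv_rpow (div_nonneg hK hD.le) hs.ne',
      mul_div_cancel₀ _ hD.ne']
  have hfactor : D * x ^ a - K * x ^ q = D * x ^ q * (x ^ s - C ^ s) := by
    rw [← hCs, show x ^ a = x ^ q * x ^ s by rw [← rpow_add hx0, add_sub_cancel]]
    ring
  have hM : 0 < M := hm.trans_le (hC.1.trans hC.2)
  have hroot := mul_abs_sub_le_abs_rpow_sub_rpow hm hs hC hx
  have hxq : 0 < x ^ q := rpow_pos_of_pos hx0 q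
  rw [hfactor, abs_mul, abs_of_pos (mul_pos hD hxq), mul_assoc]
  gcongr
  exact min_rpow_le_rpow_of_mem_Icc hm hx q

lemma mul_rpow_mem_Icc {m M ε B r : ℝ} (hB : 0 < B)
    (hε : ε ∈ Icc (m * B ^ (-r)) (M * B ^ (-r))) : ε * B ^ r ∈ Icc m M := by
  have hcancel : B ^ (-r) * B ^ r = 1 := by rw [← rpow_add hB, neg_add_cancel, rpow_zero]
  have hBr : 0 ≤ B ^ r := (rpow_pos_of_pos hB r).le
  constructor
  · simpa [mul_assoc, hcancel] using mul_le_mul_of_nonneg_right hε.1 hBr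
  · simpa [mul_assoc, hcancel] using mul_le_mul_of_nonneg_right hε.2 hBr

lemma mul_rpow_neg_one_div_le {M ε₀ B s : ℝ} (hM : 0 < M) (hε₀ : 0 < ε₀) (hs : 0 < s)
    (hB : (M / ε₀) ^ s ≤ B) : M * B ^ (-(1 / s)) ≤ ε₀ := by
  have hB0 : 0 < B := (rpow_pos_of_pos (div_pos hM hε₀) s).trans_le hB
  have hroot : M / ε₀ ≤ B ^ (1 / s) := by
    simpa [one_div, rpow_rpow_inv ((div_pos hM hε₀).le) hs.ne'] using
      rpow_le_rpow (by positivity) hB (one_div_pos.2 hs).le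
  rw [rpow_neg hB0.le, ← div_eq_mul_inv, div_le_iff₀ (rpow_pos_of_pos hB0 _)]
  rwa [div_le_iff₀' hε₀] at hroot

lemma abs_leading_balance_le_of_rescale {D K a q δb δv Lb Lv ε B r : ℝ} (hr : r * (a - q) = 1)
    (hε : 0 < ε) (hB : 0 < B)
    (h : |D * ε ^ a - K * ε ^ q / B| ≤ Lb * ε ^ (a + δb) + Lv * ε ^ (q + δv) / B) :
    |D * (ε * B ^ r) ^ a - K * (ε * B ^ r) ^ q|
      ≤ Lb * (ε * B ^ r) ^ (a + δb) * B ^ (-(r * δb))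
        + Lv * (ε * B ^ r) ^ (q + δv) * B ^ (-(r * δv)) := by
  have hpow : ∀ t, (ε * B ^ r) ^ t = ε ^ t * B ^ (r * t) := fun t => by
    rw [mul_rpow hε.le (rpow_pos_of_pos hB r).le, ← rpow_mul hB.le]
  have hBq : B ^ (r * q) * B = B ^ (r * a) := by
    rw [← rpow_add_one hB.ne']; congr 1; linear_combination -hr
  have hBb : B ^ (r * (a + δb)) * B ^ (-(r * δb)) = B ^ (r * a) := by
    rw [← rpow_add hB]; ring_nf
  have hBv : B ^ (r * (q + δv)) * B ^ (-(r * δv)) = B ^ (r * q) := by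
    rw [← rpow_add hB]; ring_nf
  have hBa : 0 < B ^ (r * a) := rpow_pos_of_pos hB _
  calc |D * (ε * B ^ r) ^ a - K * (ε * B ^ r) ^ q|
      = |D * ε ^ a - K * ε ^ q / B| * B ^ (r * a) := by
        rw [← abs_of_pos hBa, ← abs_mul, hpow, hpow, ← hBq]
        field_simp
    _ ≤ (Lb * ε ^ (a + δb) + Lv * ε ^ (q + δv) / B) * B ^ (r * a) := by gcongr
    _ = _ := by
        rw [hpow, hpow, mul_assoc Lb, mul_assoc (ε ^ _), hBb, mul_assoc Lv, mul_assoc (ε ^ _), hBv,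
          ← hBq]
        field_simp

lemma remainder_le_mul_rpow_neg_min {Lb Lv u v δb δv r m M x B : ℝ} (hLb : 0 ≤ Lb) (hLv : 0 ≤ Lv)
    (hr : 0 ≤ r) (hm : 0 < m) (hx : x ∈ Icc m M) (hB : 1 ≤ B) :
    Lb * x ^ u * B ^ (-(r * δb)) + Lv * x ^ v * B ^ (-(r * δv))
      ≤ (Lb * max (m ^ u) (M ^ u) + Lv * max (m ^ v) (M ^ v)) * B ^ (-(r * min δb δv)) := by
  have hBb : B ^ (-(r * δb)) ≤ B ^ (-(r * min δb δv)) :=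
    rpow_le_rpow_of_exponent_le hB (neg_le_neg (mul_le_mul_of_nonneg_left (min_le_left _ _) hr))
  have hBv : B ^ (-(r * δv)) ≤ B ^ (-(r * min δb δv)) :=
    rpow_le_rpow_of_exponent_le hB (neg_le_neg (mul_le_mul_of_nonneg_left (min_le_right _ _) hr))
  rw [add_mul]
  gcongr
  · exact rpow_le_max_rpow_of_mem_Icc hm hx u
  · exact rpow_le_max_rpow_of_mem_Icc hm hx v

theorem explicit_convergence_rate_general
    (D K p q δb δv Lb Lv ε₀ : ℝ)
    (hD : 0 < D) (hK : 0 < K) (hq : q < 2 * p)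
    (hLb : 0 < Lb) (hLv : 0 < Lv) (hε₀ : 0 < ε₀)
    (Δ : ℝ → ℝ → ℝ)
    (hbound : ∀ ε B : ℝ, 0 < ε → ε ≤ ε₀ → 0 < B →
      |Δ ε B - D * ε ^ (2 * p) + K * ε ^ q / B|
        ≤ Lb * ε ^ (2 * p + δb) + Lv * ε ^ (q + δv) / B)
    (m M : ℝ) (hm : 0 < m) (hmC : m < (K / D) ^ (1 / (2 * p - q)))
    (hCM : (K / D) ^ (1 / (2 * p - q)) < M) :
    ∃ B₄ > (0 : ℝ), ∃ M' > (0 : ℝ), ∀ B ≥ B₄,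
      ∀ ε ∈ Set.Icc (m * B ^ (-(1 / (2 * p - q)))) (M * B ^ (-(1 / (2 * p - q)))),
        Δ ε B = 0 →
          |ε * B ^ (1 / (2 * p - q)) - (K / D) ^ (1 / (2 * p - q))|
            ≤ M' * B ^ (-(min δb δv / (2 * p - q))) := by
  set s := 2 * p - q
  have hs : 0 < s := sub_pos.2 hq
  have hC : (K / D) ^ (1 / s) ∈ Icc m M := ⟨hmC.le, hCM.le⟩
  have hM : 0 < M := hm.trans (hmC.trans hCM)
  set c := D * min (m ^ q) (M ^ q) * (s * min (m ^ (s - 1)) (M ^ (s - 1)))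
  set A := Lb * max (m ^ (2 * p + δb)) (M ^ (2 * p + δb)) + Lv * max (m ^ (q + δv)) (M ^ (q + δv))
  have hc : 0 < c := by positivity
  have hA : 0 < A := by positivity
  refine ⟨max 1 ((M / ε₀) ^ s), by positivity, A / c, by positivity, fun B hB ε hε hΔ => ?_⟩
  have hB1 : 1 ≤ B := (le_max_left _ _).trans hB
  have hB0 : 0 < B := one_pos.trans_le hB1
  have hε0 : 0 < ε := (mul_pos hm (rpow_pos_of_pos hB0 _)).trans_le hε.1
  have hεε₀ : ε ≤ ε₀ := hε.2.trans (mul_rpow_neg_one_div_le hM hε₀ hs ((le_max_right _ _).trans hB))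
  have hx : ε * B ^ (1 / s) ∈ Icc m M := mul_rpow_mem_Icc hB0 hε
  have hzero :
      |D * ε ^ (2 * p) - K * ε ^ q / B| ≤ Lb * ε ^ (2 * p + δb) + Lv * ε ^ (q + δv) / B := by
    have h := hbound ε B hε0 hεε₀ hB0
    rwa [hΔ, zero_sub, neg_add_eq_sub, abs_sub_comm] at h
  rw [div_mul_eq_mul_div, le_div_iff₀ hc, mul_comm, ← one_div_mul_eq_div s (min δb δv)]
  calc c * |ε * B ^ (1 / s) - (K / D) ^ (1 / s)|
      ≤ |D * (ε * B ^ (1 / s)) ^ (2 * p) - K * (ε * B ^ (1 / s)) ^ q| :=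
        mul_abs_sub_root_le_abs_leading_balance hD hK.le hq hm hx hC
    _ ≤ _ := abs_leading_balance_le_of_rescale (one_div_mul_cancel hs.ne') hε0 hB0 hzero
    _ ≤ _ := remainder_le_mul_rpow_neg_min hLb.le hLv.le (one_div_pos.2 hs).le hm hx hB1

/-- Explicit convergence rate: under the power-law remainder bound, every zero
of `Δ(·,B)` in the rescaled window `[m B^{−r}, M B^{−r}]` satisfies
`|ε B^r − C| ≤ M' B^{−η}` with `η = min(δb, δv)/(2p−q)`. -/
theorem explicit_convergence_rate
    (D K p q δb δv Lb Lv ε₀ : ℝ)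
    (hD : 0 < D) (hK : 0 < K) (hp : 1 ≤ p) (hq0 : 0 ≤ q) (hq : q < 2 * p)
    (hδb : 0 < δb) (hδv : 0 < δv) (hLb : 0 < Lb) (hLv : 0 < Lv) (hε₀ : 0 < ε₀)
    (Δ : ℝ → ℝ → ℝ)
    (hbound : ∀ ε B : ℝ, 0 < ε → ε ≤ ε₀ → 0 < B →
      |Δ ε B - D * ε ^ (2 * p) + K * ε ^ q / B|
        ≤ Lb * ε ^ (2 * p + δb) + Lv * ε ^ (q + δv) / B)
    (m M : ℝ) (hm : 0 < m) (hmC : m < (K / D) ^ (1 / (2 * p - q)))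
    (hCM : (K / D) ^ (1 / (2 * p - q)) < M) :
    ∃ B₄ > (0 : ℝ), ∃ M' > (0 : ℝ), ∀ B ≥ B₄,
      ∀ ε ∈ Set.Icc (m * B ^ (-(1 / (2 * p - q)))) (M * B ^ (-(1 / (2 * p - q)))),
        Δ ε B = 0 →
          |ε * B ^ (1 / (2 * p - q)) - (K / D) ^ (1 / (2 * p - q))|
            ≤ M' * B ^ (-(min δb δv / (2 * p - q))) :=
  explicit_convergence_rate_general D K p q δb δv Lb Lv ε₀ hD hK hq hLb hLv hε₀ Δ hbound m M hm hmC
    hCM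
end

section
/- Let 1 = λ₀ < λ₁ < ... < λ_k (k ≥ 1) with real coefficients c₀,...,c_k satisfying ∑ c_j = 1 and ∑ c_j λ_j = 0, and positive allocation fractions π₀,...,π_k with ∑ π_j = 1. Let α ≠ 0, ν > 0, 0 ≤ q < 2, δ > 0 be reals. Let b₁, b₂, v : ℝ → ℝ be continuous on (0, ε₀] for some ε₀ > 0 and satisfy, as ε → 0⁺: b₁(ε) = α·ε + O(ε²), b₂(ε) = O(ε²), and v(ε) = ν·ε^q + O(ε^{q+δ}). Define Δ(ε,B) = (b₁(ε)² + v(ε)/B) − (b₂(ε)² + (1/B)·∑_{j=0}^k (c_j²/π_j)·v(λ_j ε)), and set K = ν·(∑_{j=0}^k c_j² λ_j^q / π_j − 1) and C = (K/α²)^{1/(2−q)}. Then K > 0, and for any fixed 0 < m < C < M: (i) for all sufficiently large B there exists a zero of Δ(·,B) in [m·B^{−1/(2−q)}, M·B^{−1/(2−q)}]; and (ii) every such zero ε satisfies ε·B^{1/(2−q)} → C as B → ∞. -/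
/-!
Write `Δ(ε, B) = f₁(ε) - f₂(ε) / B` with the bias gain `f₁ = b₁² - b₂² = α²ε² + O(ε³)` and the
variance penalty `f₂ = ∑ c_j²/π_j v(λ_j ε) - v = K ε^q + O(ε^{q+δ})`. With the scale
`h = B^{-1/(2-q)}` we have `1/B = h^{2-q}`, so `h⁻² Δ(t h, B) = h⁻² f₁(t h) - h^{-q} f₂(t h)`
converges to `g(t) = α² t² - K t^q` uniformly for `t ∈ [m, M]`. Since `g < 0` on `(0, C)` and
`g > 0` on `(C, ∞)`, the intermediate value theorem gives a zero of the rescaled gap in `[m, M]`,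
and uniform convergence forces every such zero into any neighbourhood of `C`, the only zero of `g`.

`K > 0` because `∑ c_j²/π_j - 1 = ∑ (c_j - π_j)²/π_j` (as `∑ c_j = ∑ π_j = 1`), which vanishes
only for `c = π`, which `∑ c_j λ_j = 0 < ∑ π_j λ_j` excludes; the weights `λ_j^q ≥ 1` only
increase the sum.
-/

open Filter Topology Set Asymptotics

theorem one_lt_sum_sq_div {ι : Type*} {s : Finset ι} {c π : ι → ℝ}
    (hπ : ∀ j ∈ s, 0 < π j) (hπs : ∑ j ∈ s, π j = 1) (hcs : ∑ j ∈ s, c j = 1)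
    (hne : ∃ j ∈ s, c j ≠ π j) :
    1 < ∑ j ∈ s, c j ^ 2 / π j := by
  have hchi : ∑ j ∈ s, (c j - π j) ^ 2 / π j = ∑ j ∈ s, c j ^ 2 / π j - 1 := by
    have hterm : ∀ j ∈ s, (c j - π j) ^ 2 / π j = c j ^ 2 / π j - 2 * c j + π j := by
      intro j hj
      field_simp [(hπ j hj).ne']
      ring
    rw [Finset.sum_congr rfl hterm, Finset.sum_add_distrib, Finset.sum_sub_distrib,
      ← Finset.mul_sum, hcs, hπs]
    ring
  have hpos : 0 < ∑ j ∈ s, (c j - π j) ^ 2 / π j := by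
    obtain ⟨j, hj, hcj⟩ := hne
    refine Finset.sum_pos' (fun i hi => div_nonneg (sq_nonneg _) (hπ i hi).le) ⟨j, hj, ?_⟩
    exact div_pos (sq_pos_of_ne_zero (sub_ne_zero.2 hcj)) (hπ j hj)
  linarith

theorem one_lt_sum_sq_mul_rpow_div {ι : Type*} {s : Finset ι} {c π lam : ι → ℝ} {q : ℝ}
    (hq : 0 ≤ q) (hlam : ∀ j ∈ s, 1 ≤ lam j) (hπ : ∀ j ∈ s, 0 < π j)
    (hπs : ∑ j ∈ s, π j = 1) (hcs : ∑ j ∈ s, c j = 1) (hclam : ∑ j ∈ s, c j * lam j = 0) :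
    1 < ∑ j ∈ s, c j ^ 2 * lam j ^ q / π j := by
  have hne : ∃ j ∈ s, c j ≠ π j := by
    by_contra! hcπ
    have hs : s.Nonempty := Finset.nonempty_of_sum_ne_zero (hπs ▸ one_ne_zero)
    have : 0 < ∑ j ∈ s, c j * lam j :=
      Finset.sum_pos (fun j hj => hcπ j hj ▸ mul_pos (hπ j hj) (one_pos.trans_le (hlam j hj))) hs
    exact this.ne' hclam
  refine (one_lt_sum_sq_div hπ hπs hcs hne).trans_le (Finset.sum_le_sum fun j hj => ?_)
  gcongr
  · exact (hπ j hj).le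
  · exact le_mul_of_one_le_right (sq_nonneg _) (Real.one_le_rpow (hlam j hj) hq)

theorem isBigO_nhdsGT_zero_of_bound {f g : ℝ → ℝ}
    (h : ∃ δ₀ > (0 : ℝ), ∃ L > (0 : ℝ), ∀ ε : ℝ, 0 < ε → ε ≤ δ₀ → |f ε| ≤ L * g ε) :
    f =O[𝓝[>] 0] g := by
  obtain ⟨δ₀, hδ₀, L, hL, hbound⟩ := h
  refine IsBigO.of_bound L ?_
  filter_upwards [Ioo_mem_nhdsGT hδ₀] with ε hε
  exact (hbound ε hε.1 hε.2.le).trans (mul_le_mul_of_nonneg_left (le_abs_self _) hL.le)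

theorem eventually_continuousAt_of_continuousOn_Ioc {f : ℝ → ℝ} {ε₀ : ℝ} (hε₀ : 0 < ε₀)
    (hf : ContinuousOn f (Ioc 0 ε₀)) : ∀ᶠ ε in 𝓝[>] 0, ContinuousAt f ε := by
  filter_upwards [Ioo_mem_nhdsGT hε₀] with ε hε
  exact hf.continuousAt (mem_of_superset (Ioo_mem_nhds hε.1 hε.2) Ioo_subset_Ioc_self)

theorem isBigO_sq_sub_sq_sub {b₁ b₂ : ℝ → ℝ} {α : ℝ}
    (h₁ : (fun ε => b₁ ε - α * ε) =O[𝓝[>] 0] fun ε => ε ^ 2)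
    (h₂ : b₂ =O[𝓝[>] 0] fun ε => ε ^ 2) :
    (fun ε => b₁ ε ^ 2 - b₂ ε ^ 2 - α ^ 2 * ε ^ 2) =O[𝓝[>] 0] fun ε => ε ^ 3 := by
  have hsq : (fun ε : ℝ => ε ^ 2) =O[𝓝[>] 0] fun ε => ε :=
    by simpa using (isLittleO_pow_pow (𝕜 := ℝ) one_lt_two).isBigO.mono nhdsWithin_le_nhds
  have h43 : (fun ε : ℝ => ε ^ 4) =O[𝓝[>] 0] fun ε => ε ^ 3 :=
    (isLittleO_pow_pow (by norm_num)).isBigO.mono nhdsWithin_le_nhds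
  -- `b₁² - α²ε² = (b₁ - αε) (b₁ - αε + 2αε)`, a product of an `O(ε²)` and an `O(ε)` term
  have hsum : (fun ε => b₁ ε - α * ε + 2 * α * ε) =O[𝓝[>] 0] fun ε => ε :=
    (h₁.trans hsq).add ((isBigO_refl _ _).const_mul_left (2 * α))
  have hb₁ : (fun ε => b₁ ε ^ 2 - α ^ 2 * ε ^ 2) =O[𝓝[>] 0] fun ε => ε ^ 3 :=
    (h₁.mul hsum).congr (fun ε => by ring) (fun ε => by ring)
  have hb₂ : (fun ε => b₂ ε ^ 2) =O[𝓝[>] 0] fun ε => ε ^ 3 :=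
    ((h₂.mul h₂).congr (fun ε => by ring) (fun ε => by ring)).trans h43
  exact (hb₁.sub hb₂).congr_left fun ε => by ring

theorem isBigO_sum_comp_const_mul_sub {ι : Type*} {s : Finset ι} {w lam : ι → ℝ} {v : ℝ → ℝ}
    {ν q r : ℝ} (hlam : ∀ j ∈ s, 0 < lam j)
    (hv : (fun ε => v ε - ν * ε ^ q) =O[𝓝[>] 0] fun ε => ε ^ r) :
    (fun ε => ∑ j ∈ s, w j * v (lam j * ε) - ν * (∑ j ∈ s, w j * lam j ^ q) * ε ^ q)
      =O[𝓝[>] 0] fun ε => ε ^ r := by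
  have hterm : ∀ j ∈ s,
      (fun ε => w j * (v (lam j * ε) - ν * (lam j * ε) ^ q)) =O[𝓝[>] 0] fun ε => ε ^ r := by
    intro j hj
    have hscale : Tendsto (lam j * ·) (𝓝[>] 0) (𝓝[>] 0) :=
      tendsto_iff_comap.2 (comap_mulLeft_nhdsGT_zero (hlam j hj)).ge
    have hpow : (fun ε => (lam j * ε) ^ r) =O[𝓝[>] 0] fun ε => ε ^ r := by
      refine (isBigO_const_mul_self (lam j ^ r) _ _).congr' ?_ EventuallyEq.rfl
      filter_upwards [self_mem_nhdsWithin] with ε hε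
      exact (Real.mul_rpow (hlam j hj).le (le_of_lt hε)).symm
    exact ((hv.comp_tendsto hscale).trans hpow).const_mul_left (w j)
  refine (IsBigO.sum hterm).congr' ?_ EventuallyEq.rfl
  filter_upwards [self_mem_nhdsWithin] with ε hε
  simp only [Finset.sum_apply, mul_sub, Finset.sum_sub_distrib, Finset.sum_mul, Finset.mul_sum]
  congr 1
  refine Finset.sum_congr rfl fun j hj => ?_
  rw [Real.mul_rpow (hlam j hj).le (le_of_lt hε)]
  ring

theorem eventually_continuousAt_sum_comp_const_mul {ι : Type*} {s : Finset ι} {w lam : ι → ℝ}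
    {v : ℝ → ℝ} (hlam : ∀ j ∈ s, 0 < lam j) (hv : ∀ᶠ ε in 𝓝[>] 0, ContinuousAt v ε) :
    ∀ᶠ ε in 𝓝[>] 0, ContinuousAt (fun ε => ∑ j ∈ s, w j * v (lam j * ε)) ε := by
  have hcomp : ∀ᶠ ε in 𝓝[>] 0, ∀ j ∈ s, ContinuousAt v (lam j * ε) :=
    (eventually_all_finset s).2 fun j hj => eventually_nhdsGT_zero_mul_left (hlam j hj) hv
  filter_upwards [hcomp] with ε hε
  exact tendsto_finsetSum s fun j hj =>
    ((hε j hj).comp (continuous_const_mul (lam j)).continuousAt).const_mul (w j)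

theorem eventually_forall_Icc_mul {P : ℝ → Prop} {m M : ℝ} (hm : 0 < m)
    (hP : ∀ᶠ ε in 𝓝[>] 0, P ε) : ∀ᶠ h in 𝓝[>] 0, ∀ t ∈ Icc m M, P (t * h) := by
  obtain ⟨ε₁, hε₁, hP⟩ := (nhdsGT_basis (0 : ℝ)).eventually_iff.1 hP
  have hN : 0 < max M 1 := lt_max_of_lt_right one_pos
  filter_upwards [Ioo_mem_nhdsGT (div_pos hε₁ hN)] with h hh t ht
  refine hP ⟨mul_pos (hm.trans_le ht.1) hh.1, ?_⟩
  calc t * h ≤ max M 1 * h := mul_le_mul_of_nonneg_right (ht.2.trans (le_max_left _ _)) hh.1.le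
    _ < max M 1 * (ε₁ / max M 1) := mul_lt_mul_of_pos_left hh.2 hN
    _ = ε₁ := mul_div_cancel₀ _ hN.ne'

theorem rpow_neg_mul_mul_rpow {t h : ℝ} (ht : 0 ≤ t) (hh : 0 < h) (p s : ℝ) :
    h ^ (-p) * (t * h) ^ (p + s) = t ^ (p + s) * h ^ s := by
  rw [Real.mul_rpow ht hh.le, mul_left_comm, ← Real.rpow_add hh, neg_add_cancel_left]

theorem tendstoUniformlyOn_rpow_neg_mul_comp_mul {ι : Type*} {l : Filter ι} {h : ι → ℝ}
    {f : ℝ → ℝ} {a p δ m M : ℝ} (hh : Tendsto h l (𝓝[>] 0)) (hδ : 0 < δ) (hm : 0 < m)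
    (hf : (fun ε => f ε - a * ε ^ p) =O[𝓝[>] 0] fun ε => ε ^ (p + δ)) :
    TendstoUniformlyOn (fun i t => h i ^ (-p) * f (t * h i)) (fun t => a * t ^ p) l (Icc m M) := by
  obtain ⟨c, hc, hcf⟩ := hf.exists_pos
  obtain ⟨T, hT⟩ := isCompact_Icc.exists_bound_of_continuousOn (s := Icc m M)
    (continuousOn_id.rpow_const fun t ht => Or.inl (hm.trans_le ht.1).ne')
  have hsmall : Tendsto (fun x : ℝ => c * T * x ^ δ) (𝓝[>] 0) (𝓝 0) := by
    simpa [Real.zero_rpow hδ.ne'] using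
      ((Real.continuousAt_rpow_const 0 δ (Or.inr hδ.le)).tendsto.const_mul (c * T)).mono_left
        nhdsWithin_le_nhds
  rw [Metric.tendstoUniformlyOn_iff]
  intro η hη
  filter_upwards [hh.eventually (eventually_forall_Icc_mul hm hcf.bound),
    hh.eventually self_mem_nhdsWithin, hh.eventually (hsmall.eventually (gt_mem_nhds hη))]
    with i hbound hpos hlt t ht
  have ht0 : 0 ≤ t := (hm.trans_le ht.1).le
  have hmain : h i ^ (-p) * (t * h i) ^ p = t ^ p := by
    simpa using rpow_neg_mul_mul_rpow ht0 hpos p 0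
  rw [dist_comm, Real.dist_eq]
  calc |h i ^ (-p) * f (t * h i) - a * t ^ p|
      = |h i ^ (-p) * (f (t * h i) - a * (t * h i) ^ p)| := by
        rw [mul_sub, mul_left_comm _ a, hmain]
    _ = h i ^ (-p) * |f (t * h i) - a * (t * h i) ^ p| := by
        rw [abs_mul, abs_of_pos (Real.rpow_pos_of_pos hpos _)]
    _ ≤ h i ^ (-p) * (c * (t * h i) ^ (p + δ)) := by
        have := hbound t ht
        rw [Real.norm_eq_abs, Real.norm_eq_abs,
          abs_of_nonneg (Real.rpow_nonneg (mul_nonneg ht0 hpos.le) _)] at this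
        gcongr
    _ = c * t ^ (p + δ) * h i ^ δ := by
        rw [mul_left_comm, rpow_neg_mul_mul_rpow ht0 hpos, mul_assoc]
    _ ≤ c * T * h i ^ δ := by
        gcongr
        exact (le_abs_self _).trans (hT t ht)
    _ < η := hlt

theorem eventually_exists_zero_of_tendstoUniformlyOn {ι : Type*} {l : Filter ι}
    {F : ι → ℝ → ℝ} {g : ℝ → ℝ} {a b : ℝ} (hab : a ≤ b)
    (hF : TendstoUniformlyOn F g l (Icc a b))
    (hcont : ∀ᶠ i in l, ContinuousOn (F i) (Icc a b)) (ha : g a < 0) (hb : 0 < g b) :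
    ∀ᶠ i in l, ∃ t ∈ Icc a b, F i t = 0 := by
  filter_upwards [hcont, (hF.tendsto_at (left_mem_Icc.2 hab)).eventually (gt_mem_nhds ha),
    (hF.tendsto_at (right_mem_Icc.2 hab)).eventually (lt_mem_nhds hb)] with i hi hai hbi
  exact intermediate_value_Icc hab hi ⟨hai.le, hbi.le⟩

theorem eventually_abs_sub_le_of_tendstoUniformlyOn {ι : Type*} {l : Filter ι}
    {F : ι → ℝ → ℝ} {g : ℝ → ℝ} {a b C η : ℝ} (hF : TendstoUniformlyOn F g l (Icc a b))
    (hg : ContinuousOn g (Icc a b)) (hzero : ∀ t ∈ Icc a b, g t = 0 → t = C) (hη : 0 < η) :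
    ∀ᶠ i in l, ∀ t ∈ Icc a b, F i t = 0 → |t - C| ≤ η := by
  set T := Icc a b ∩ {t | η ≤ |t - C|}
  rcases T.eq_empty_or_nonempty with hT | hT
  · refine Eventually.of_forall fun i t ht _ => le_of_not_gt fun hlt => ?_
    exact (Set.eq_empty_iff_forall_notMem.1 hT) t ⟨ht, hlt.le⟩
  have hTc : IsCompact T :=
    isCompact_Icc.inter_right
      (isClosed_le continuous_const (continuous_id.sub continuous_const).abs)
  obtain ⟨t₀, ht₀, hmin⟩ := hTc.exists_isMinOn hT (hg.mono inter_subset_left).abs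
  have hgap : 0 < |g t₀| := by
    refine abs_pos.2 fun h => ?_
    have : η ≤ |t₀ - C| := ht₀.2
    rw [hzero t₀ ht₀.1 h, sub_self, abs_zero] at this
    exact this.not_gt hη
  filter_upwards [Metric.tendstoUniformlyOn_iff.1 hF _ hgap] with i hi t ht hFt
  refine le_of_not_gt fun hlt => ?_
  have hclose := hi t ht
  rw [hFt, Real.dist_eq, sub_zero] at hclose
  exact (hmin ⟨ht, hlt.le⟩).not_gt hclose

theorem mul_rpow_sub_mul_rpow_eq {a K p q t : ℝ} (ht : 0 < t) :
    a * t ^ p - K * t ^ q = t ^ q * (a * t ^ (p - q) - K) := by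
  rw [mul_sub, mul_left_comm, ← Real.rpow_add ht, add_sub_cancel, mul_comm (t ^ q)]

theorem mul_rpow_sub_mul_rpow_neg_iff {a K p q t : ℝ} (ha : 0 < a) (hK : 0 ≤ K)
    (hqp : q < p) (ht : 0 < t) :
    a * t ^ p - K * t ^ q < 0 ↔ t < (K / a) ^ (1 / (p - q)) := by
  rw [mul_rpow_sub_mul_rpow_eq ht, ← mul_zero (t ^ q),
    mul_lt_mul_iff_of_pos_left (Real.rpow_pos_of_pos ht q), sub_neg,
    one_div, Real.lt_rpow_inv_iff_of_pos ht.le (div_nonneg hK ha.le) (sub_pos.2 hqp),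
    lt_div_iff₀' ha]

theorem mul_rpow_sub_mul_rpow_pos_iff {a K p q t : ℝ} (ha : 0 < a) (hK : 0 ≤ K)
    (hqp : q < p) (ht : 0 < t) :
    0 < a * t ^ p - K * t ^ q ↔ (K / a) ^ (1 / (p - q)) < t := by
  rw [mul_rpow_sub_mul_rpow_eq ht, mul_pos_iff_of_pos_left (Real.rpow_pos_of_pos ht q), sub_pos,
    one_div, Real.rpow_inv_lt_iff_of_pos (div_nonneg hK ha.le) ht.le (sub_pos.2 hqp),
    div_lt_iff₀' ha]

theorem tendsto_rpow_neg_atTop_nhdsGT_zero {y : ℝ} (hy : 0 < y) :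
    Tendsto (fun x : ℝ => x ^ (-y)) atTop (𝓝[>] 0) :=
  tendsto_nhdsWithin_iff.2 ⟨tendsto_rpow_neg_atTop hy,
    (eventually_gt_atTop 0).mono fun _ hx => Real.rpow_pos_of_pos hx _⟩

section RescaledGap

variable {f₁ f₂ : ℝ → ℝ} {a K q m M : ℝ}

theorem tendstoUniformlyOn_rescaled_gap {δ₁ δ₂ : ℝ} (hq : q < 2) (hδ₁ : 0 < δ₁)
    (hδ₂ : 0 < δ₂) (hm : 0 < m)
    (hf₁ : (fun ε => f₁ ε - a * ε ^ (2 : ℝ)) =O[𝓝[>] 0] fun ε => ε ^ (2 + δ₁))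
    (hf₂ : (fun ε => f₂ ε - K * ε ^ q) =O[𝓝[>] 0] fun ε => ε ^ (q + δ₂)) :
    TendstoUniformlyOn
      (fun B t => (B ^ (-(1 / (2 - q)))) ^ (-(2 : ℝ)) *
        (f₁ (t * B ^ (-(1 / (2 - q)))) - f₂ (t * B ^ (-(1 / (2 - q)))) / B))
      (fun t => a * t ^ (2 : ℝ) - K * t ^ q) atTop (Icc m M) := by
  have hB := tendsto_rpow_neg_atTop_nhdsGT_zero (one_div_pos.2 (sub_pos.2 hq))
  refine ((tendstoUniformlyOn_rpow_neg_mul_comp_mul hB hδ₁ hm hf₁).sub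
    (tendstoUniformlyOn_rpow_neg_mul_comp_mul hB hδ₂ hm hf₂)).congr ?_
  filter_upwards [eventually_gt_atTop 0] with B hB t _
  have hscale : (B ^ (-(1 / (2 - q)))) ^ (-q) = (B ^ (-(1 / (2 - q)))) ^ (-(2 : ℝ)) / B := by
    rw [← Real.rpow_mul hB.le, ← Real.rpow_mul hB.le, ← Real.rpow_sub_one hB.ne']
    congr 1
    field_simp [(sub_pos.2 hq).ne']
    ring
  simp only [Pi.sub_apply, hscale]
  ring

theorem eventually_continuousOn_rescaled_gap (hq : q < 2) (hm : 0 < m)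
    (hcont : ∀ᶠ ε in 𝓝[>] 0, ContinuousAt f₁ ε ∧ ContinuousAt f₂ ε) :
    ∀ᶠ B in atTop, ContinuousOn
      (fun t => (B ^ (-(1 / (2 - q)))) ^ (-(2 : ℝ)) *
        (f₁ (t * B ^ (-(1 / (2 - q)))) - f₂ (t * B ^ (-(1 / (2 - q)))) / B)) (Icc m M) := by
  filter_upwards [(tendsto_rpow_neg_atTop_nhdsGT_zero (one_div_pos.2 (sub_pos.2 hq))).eventually
    (eventually_forall_Icc_mul (M := M) hm hcont)] with B hB t ht
  have hmul : ContinuousAt (· * B ^ (-(1 / (2 - q)))) t := (continuous_mul_const _).continuousAt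
  have h₁ := ContinuousAt.comp (x := t) (hB t ht).1 hmul
  have h₂ := ContinuousAt.comp (x := t) (hB t ht).2 hmul
  exact ((h₁.sub (h₂.div_const B)).const_mul _).continuousWithinAt

end RescaledGap

theorem mse_gap_zeros_of_isBigO {f₁ f₂ : ℝ → ℝ} {Δ : ℝ → ℝ → ℝ} {a K q δ₁ δ₂ m M : ℝ}
    (ha : 0 < a) (hK : 0 ≤ K) (hq : q < 2) (hδ₁ : 0 < δ₁) (hδ₂ : 0 < δ₂)
    (hf₁ : (fun ε => f₁ ε - a * ε ^ (2 : ℝ)) =O[𝓝[>] 0] fun ε => ε ^ (2 + δ₁))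
    (hf₂ : (fun ε => f₂ ε - K * ε ^ q) =O[𝓝[>] 0] fun ε => ε ^ (q + δ₂))
    (hcont : ∀ᶠ ε in 𝓝[>] 0, ContinuousAt f₁ ε ∧ ContinuousAt f₂ ε)
    (hΔ : ∀ ε B, Δ ε B = f₁ ε - f₂ ε / B) (hm : 0 < m)
    (hmC : m < (K / a) ^ (1 / (2 - q))) (hCM : (K / a) ^ (1 / (2 - q)) < M) :
    (∀ᶠ B in atTop, ∃ ε ∈ Icc (m * B ^ (-(1 / (2 - q)))) (M * B ^ (-(1 / (2 - q)))),
      Δ ε B = 0) ∧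
    ∀ η > 0, ∀ᶠ B in atTop, ∀ ε ∈ Icc (m * B ^ (-(1 / (2 - q)))) (M * B ^ (-(1 / (2 - q)))),
      Δ ε B = 0 → |ε * B ^ (1 / (2 - q)) - (K / a) ^ (1 / (2 - q))| ≤ η := by
  set r := 1 / (2 - q)
  set C := (K / a) ^ r
  have hpos : ∀ t ∈ Icc m M, 0 < t := fun t ht => hm.trans_le ht.1
  have hneg_iff := fun t ht => mul_rpow_sub_mul_rpow_neg_iff ha hK hq (hpos t ht)
  have hpos_iff := fun t ht => mul_rpow_sub_mul_rpow_pos_iff ha hK hq (hpos t ht)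
  have hmM : m ≤ M := (hmC.trans hCM).le
  have hg : ContinuousOn (fun t => a * t ^ (2 : ℝ) - K * t ^ q) (Icc m M) :=
    (continuousOn_const.mul (continuousOn_id.rpow_const fun t _ => Or.inr zero_le_two)).sub
      (continuousOn_const.mul (continuousOn_id.rpow_const fun t ht => Or.inl (hpos t ht).ne'))
  have hgzero : ∀ t ∈ Icc m M, a * t ^ (2 : ℝ) - K * t ^ q = 0 → t = C := by
    intro t ht h0
    rcases lt_trichotomy t C with hlt | heq | hgt
    · exact absurd h0 ((hneg_iff t ht).2 hlt).ne
    · exact heq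
    · exact absurd h0 ((hpos_iff t ht).2 hgt).ne'
  have hunif :=
    tendstoUniformlyOn_rescaled_gap (f₁ := f₁) (f₂ := f₂) (M := M) hq hδ₁ hδ₂ hm hf₁ hf₂
  have hzero_iff : ∀ B > 0, ∀ t, (B ^ (-r)) ^ (-(2 : ℝ)) *
      (f₁ (t * B ^ (-r)) - f₂ (t * B ^ (-r)) / B) = 0 ↔ Δ (t * B ^ (-r)) B = 0 := by
    intro B hB t
    rw [hΔ, mul_eq_zero, or_iff_right (Real.rpow_pos_of_pos (Real.rpow_pos_of_pos hB _) _).ne']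
  constructor
  · filter_upwards [eventually_exists_zero_of_tendstoUniformlyOn hmM hunif
      (eventually_continuousOn_rescaled_gap hq hm hcont)
      ((hneg_iff m (left_mem_Icc.2 hmM)).2 hmC) ((hpos_iff M (right_mem_Icc.2 hmM)).2 hCM),
      eventually_gt_atTop 0] with B ⟨t, ht, hFt⟩ hB
    have hscale : 0 ≤ B ^ (-r) := Real.rpow_nonneg hB.le _
    exact ⟨t * B ^ (-r), ⟨mul_le_mul_of_nonneg_right ht.1 hscale,
      mul_le_mul_of_nonneg_right ht.2 hscale⟩, (hzero_iff B hB t).1 hFt⟩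
  · intro η hη
    filter_upwards [eventually_abs_sub_le_of_tendstoUniformlyOn hunif hg hgzero hη,
      eventually_gt_atTop 0] with B hloc hB ε hε hΔε
    have hBr : 0 < B ^ r := Real.rpow_pos_of_pos hB r
    have hcancel : ε * B ^ r * B ^ (-r) = ε := by
      rw [Real.rpow_neg hB.le, mul_assoc, mul_inv_cancel₀ hBr.ne', mul_one]
    rw [Real.rpow_neg hB.le, ← div_eq_mul_inv, ← div_eq_mul_inv] at hε
    exact hloc _ ⟨(div_le_iff₀ hBr).1 hε.1, (le_div_iff₀ hBr).1 hε.2⟩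
      ((hzero_iff B hB _).2 (hcancel.symm ▸ hΔε))

theorem exists_pos_forall_ge_of_eventually_atTop {p : ℝ → Prop} (h : ∀ᶠ x in atTop, p x) :
    ∃ x₀ > (0 : ℝ), ∀ x ≥ x₀, p x := by
  obtain ⟨x₀, hx₀, hp⟩ := (atTop_basis' 1).eventually_iff.1 h
  exact ⟨x₀, one_pos.trans_le hx₀, fun _ hx => hp hx⟩

theorem richardson_help_harm_boundary_general
    (k : ℕ) (lam c pi : ℕ → ℝ)
    (hlam0 : lam 0 = 1)
    (hlam_mono : ∀ i j : ℕ, i < j → j ≤ k → lam i < lam j)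
    (hc_sum : ∑ j ∈ Finset.range (k + 1), c j = 1)
    (hc_lam : ∑ j ∈ Finset.range (k + 1), c j * lam j = 0)
    (hpi_pos : ∀ j ≤ k, 0 < pi j)
    (hpi_sum : ∑ j ∈ Finset.range (k + 1), pi j = 1)
    (α ν q δ ε₀ : ℝ)
    (hα : α ≠ 0) (hν : 0 < ν) (hq0 : 0 ≤ q) (hq2 : q < 2) (hδ : 0 < δ)
    (hε₀ : 0 < ε₀)
    (b₁ b₂ v : ℝ → ℝ)
    (hb₁cont : ContinuousOn b₁ (Set.Ioc 0 ε₀))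
    (hb₂cont : ContinuousOn b₂ (Set.Ioc 0 ε₀))
    (hvcont : ContinuousOn v (Set.Ioc 0 ε₀))
    (hb₁ : ∃ δ₀ > (0 : ℝ), ∃ L > (0 : ℝ), ∀ ε : ℝ, 0 < ε → ε ≤ δ₀ →
      |b₁ ε - α * ε| ≤ L * ε ^ 2)
    (hb₂ : ∃ δ₀ > (0 : ℝ), ∃ L > (0 : ℝ), ∀ ε : ℝ, 0 < ε → ε ≤ δ₀ →
      |b₂ ε| ≤ L * ε ^ 2)
    (hv : ∃ δ₀ > (0 : ℝ), ∃ L > (0 : ℝ), ∀ ε : ℝ, 0 < ε → ε ≤ δ₀ →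
      |v ε - ν * ε ^ q| ≤ L * ε ^ (q + δ))
    (Δ : ℝ → ℝ → ℝ)
    (hΔ : ∀ ε B : ℝ, Δ ε B =
      ((b₁ ε) ^ 2 + v ε / B) -
      ((b₂ ε) ^ 2 + (1 / B) *
        ∑ j ∈ Finset.range (k + 1), (c j) ^ 2 / pi j * v (lam j * ε))) :
    0 < ν * ((∑ j ∈ Finset.range (k + 1), (c j) ^ 2 * (lam j) ^ q / pi j) - 1) ∧
    ∀ m M : ℝ, 0 < m →
      m < ((ν * ((∑ j ∈ Finset.range (k + 1), (c j) ^ 2 * (lam j) ^ q / pi j) - 1))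
            / α ^ 2) ^ (1 / (2 - q)) →
      ((ν * ((∑ j ∈ Finset.range (k + 1), (c j) ^ 2 * (lam j) ^ q / pi j) - 1))
            / α ^ 2) ^ (1 / (2 - q)) < M →
      ((∃ B₁ > (0 : ℝ), ∀ B ≥ B₁,
          ∃ ε ∈ Set.Icc (m * B ^ (-(1 / (2 - q)))) (M * B ^ (-(1 / (2 - q)))),
            Δ ε B = 0) ∧
       (∀ η' > (0 : ℝ), ∃ B₂ > (0 : ℝ), ∀ B ≥ B₂,
          ∀ ε ∈ Set.Icc (m * B ^ (-(1 / (2 - q)))) (M * B ^ (-(1 / (2 - q)))),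
            Δ ε B = 0 →
              |ε * B ^ (1 / (2 - q)) -
                ((ν * ((∑ j ∈ Finset.range (k + 1),
                    (c j) ^ 2 * (lam j) ^ q / pi j) - 1)) / α ^ 2) ^ (1 / (2 - q))|
                ≤ η')) := by
  have hπ : ∀ j ∈ Finset.range (k + 1), 0 < pi j :=
    fun j hj => hpi_pos j (Finset.mem_range_succ_iff.1 hj)
  have hlam : ∀ j ∈ Finset.range (k + 1), 1 ≤ lam j := by
    intro j hj
    rcases Nat.eq_zero_or_pos j with rfl | hj0
    · exact hlam0.ge
    · exact hlam0 ▸ (hlam_mono 0 j hj0 (Finset.mem_range_succ_iff.1 hj)).le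
  have hlam_pos : ∀ j ∈ Finset.range (k + 1), 0 < lam j :=
    fun j hj => one_pos.trans_le (hlam j hj)
  have hK : 0 < ν * ((∑ j ∈ Finset.range (k + 1), c j ^ 2 * lam j ^ q / pi j) - 1) :=
    mul_pos hν (sub_pos.2 (one_lt_sum_sq_mul_rpow_div hq0 hlam hπ hpi_sum hc_sum hc_lam))
  refine ⟨hK, fun m M hm hmC hCM => ?_⟩
  have hv' := isBigO_nhdsGT_zero_of_bound hv
  have hbias : (fun ε => (b₁ ε ^ 2 - b₂ ε ^ 2) - α ^ 2 * ε ^ (2 : ℝ))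
      =O[𝓝[>] 0] fun ε => ε ^ ((2 : ℝ) + 1) := by
    simpa only [Real.rpow_two, show (2 : ℝ) + 1 = (3 : ℕ) by norm_num, Real.rpow_natCast] using
      isBigO_sq_sub_sq_sub (isBigO_nhdsGT_zero_of_bound hb₁) (isBigO_nhdsGT_zero_of_bound hb₂)
  have hvariance : (fun ε => (∑ j ∈ Finset.range (k + 1), c j ^ 2 / pi j * v (lam j * ε) - v ε)
      - ν * ((∑ j ∈ Finset.range (k + 1), c j ^ 2 * lam j ^ q / pi j) - 1) * ε ^ q)
      =O[𝓝[>] 0] fun ε => ε ^ (q + δ) := by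
    refine ((isBigO_sum_comp_const_mul_sub (w := fun j => c j ^ 2 / pi j) hlam_pos hv').sub
      hv').congr_left fun ε => ?_
    simp only [div_mul_eq_mul_div]
    ring
  have hv_cont := eventually_continuousAt_of_continuousOn_Ioc hε₀ hvcont
  have hcont : ∀ᶠ ε in 𝓝[>] 0, ContinuousAt (fun ε => b₁ ε ^ 2 - b₂ ε ^ 2) ε ∧
      ContinuousAt
        (fun ε => ∑ j ∈ Finset.range (k + 1), c j ^ 2 / pi j * v (lam j * ε) - v ε) ε := by
    filter_upwards [eventually_continuousAt_of_continuousOn_Ioc hε₀ hb₁cont,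
      eventually_continuousAt_of_continuousOn_Ioc hε₀ hb₂cont, hv_cont,
      eventually_continuousAt_sum_comp_const_mul hlam_pos hv_cont] with ε h₁ h₂ hvε hsum
    exact ⟨(h₁.pow 2).sub (h₂.pow 2), hsum.sub hvε⟩
  obtain ⟨hexists, hlocal⟩ := mse_gap_zeros_of_isBigO (Δ := Δ) (sq_pos_of_ne_zero hα) hK.le hq2
    one_pos hδ hbias hvariance hcont (fun ε B => by rw [hΔ]; ring) hm hmC hCM
  exact ⟨exists_pos_forall_ge_of_eventually_atTop hexists,
    fun η hη => exists_pos_forall_ge_of_eventually_atTop (hlocal η hη)⟩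

/-- Finite-shot help-harm boundary for fixed Richardson ZNE: with linear
leading bias `b₁(ε) = α ε + O(ε²)`, higher-order mitigated bias
`b₂(ε) = O(ε²)`, and variance `v(ε) = ν ε^q + O(ε^{q+δ})` with `0 ≤ q < 2`,
the variance penalty constant `K = ν (∑ c_j² λ_j^q/π_j − 1)` is positive and
every zero of the MSE difference in the rescaled window satisfies
`ε B^{1/(2−q)} → C = (K/α²)^{1/(2−q)}`. -/
theorem richardson_help_harm_boundary
    (k : ℕ) (hk : 1 ≤ k) (lam c pi : ℕ → ℝ)
    (hlam0 : lam 0 = 1)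
    (hlam_mono : ∀ i j : ℕ, i < j → j ≤ k → lam i < lam j)
    (hc_sum : ∑ j ∈ Finset.range (k + 1), c j = 1)
    (hc_lam : ∑ j ∈ Finset.range (k + 1), c j * lam j = 0)
    (hpi_pos : ∀ j ≤ k, 0 < pi j)
    (hpi_sum : ∑ j ∈ Finset.range (k + 1), pi j = 1)
    (α ν q δ ε₀ : ℝ)
    (hα : α ≠ 0) (hν : 0 < ν) (hq0 : 0 ≤ q) (hq2 : q < 2) (hδ : 0 < δ)
    (hε₀ : 0 < ε₀)
    (b₁ b₂ v : ℝ → ℝ)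
    (hb₁cont : ContinuousOn b₁ (Set.Ioc 0 ε₀))
    (hb₂cont : ContinuousOn b₂ (Set.Ioc 0 ε₀))
    (hvcont : ContinuousOn v (Set.Ioc 0 ε₀))
    (hb₁ : ∃ δ₀ > (0 : ℝ), ∃ L > (0 : ℝ), ∀ ε : ℝ, 0 < ε → ε ≤ δ₀ →
      |b₁ ε - α * ε| ≤ L * ε ^ 2)
    (hb₂ : ∃ δ₀ > (0 : ℝ), ∃ L > (0 : ℝ), ∀ ε : ℝ, 0 < ε → ε ≤ δ₀ →
      |b₂ ε| ≤ L * ε ^ 2)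
    (hv : ∃ δ₀ > (0 : ℝ), ∃ L > (0 : ℝ), ∀ ε : ℝ, 0 < ε → ε ≤ δ₀ →
      |v ε - ν * ε ^ q| ≤ L * ε ^ (q + δ))
    (Δ : ℝ → ℝ → ℝ)
    (hΔ : ∀ ε B : ℝ, Δ ε B =
      ((b₁ ε) ^ 2 + v ε / B) -
      ((b₂ ε) ^ 2 + (1 / B) *
        ∑ j ∈ Finset.range (k + 1), (c j) ^ 2 / pi j * v (lam j * ε))) :
    0 < ν * ((∑ j ∈ Finset.range (k + 1), (c j) ^ 2 * (lam j) ^ q / pi j) - 1) ∧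
    ∀ m M : ℝ, 0 < m →
      m < ((ν * ((∑ j ∈ Finset.range (k + 1), (c j) ^ 2 * (lam j) ^ q / pi j) - 1))
            / α ^ 2) ^ (1 / (2 - q)) →
      ((ν * ((∑ j ∈ Finset.range (k + 1), (c j) ^ 2 * (lam j) ^ q / pi j) - 1))
            / α ^ 2) ^ (1 / (2 - q)) < M →
      ((∃ B₁ > (0 : ℝ), ∀ B ≥ B₁,
          ∃ ε ∈ Set.Icc (m * B ^ (-(1 / (2 - q)))) (M * B ^ (-(1 / (2 - q)))),
            Δ ε B = 0) ∧
       (∀ η' > (0 : ℝ), ∃ B₂ > (0 : ℝ), ∀ B ≥ B₂,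
          ∀ ε ∈ Set.Icc (m * B ^ (-(1 / (2 - q)))) (M * B ^ (-(1 / (2 - q)))),
            Δ ε B = 0 →
              |ε * B ^ (1 / (2 - q)) -
                ((ν * ((∑ j ∈ Finset.range (k + 1),
                    (c j) ^ 2 * (lam j) ^ q / pi j) - 1)) / α ^ 2) ^ (1 / (2 - q))|
                ≤ η')) :=
  richardson_help_harm_boundary_general k lam c pi hlam0 hlam_mono hc_sum hc_lam hpi_pos hpi_sum α ν
    q δ ε₀ hα hν hq0 hq2 hδ hε₀ b₁ b₂ v hb₁cont hb₂cont hvcont hb₁ hb₂ hv Δ hΔ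
end

section
/- (i) Let c₀,...,c_k be nonzero reals, v₀,...,v_k positive reals, and π₀,...,π_k positive reals with ∑_{j=0}^k π_j = 1. Then ∑_{j=0}^k c_j² v_j / π_j ≥ (∑_{j=0}^k |c_j|·√v_j)², with equality when π_j = |c_j|·√v_j / (∑_{ℓ=0}^k |c_ℓ|·√v_ℓ) for all j. (ii) Moreover, if ν > 0, q ≥ 0, the λ_j satisfy λ_j ≥ 1, and the coefficients satisfy ∑_{j=0}^k c_j = 1 and ∑_{j=0}^k c_j λ_j = 0, then the optimal-allocation penalty constant K^{opt} := ν·((∑_{j=0}^k |c_j|·λ_j^{q/2})² − 1) is strictly positive. -/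
/-- Optimal shot allocation: (i) for positive allocation fractions summing to
one, `∑ c_j² v_j/π_j ≥ (∑ |c_j| √v_j)²`, with equality at the Lagrange-optimal
allocation `π_j = |c_j| √v_j / ∑ |c_ℓ| √v_ℓ`; (ii) for a nontrivial Richardson
rule with `λ_j ≥ 1`, the optimal-allocation penalty constant
`K^opt = ν ((∑ |c_j| λ_j^{q/2})² − 1)` is strictly positive. -/
theorem optimal_shot_allocation
    (k : ℕ) (c v pi : ℕ → ℝ)
    (hc : ∀ j ≤ k, c j ≠ 0)
    (hv : ∀ j ≤ k, 0 < v j)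
    (hpi_pos : ∀ j ≤ k, 0 < pi j)
    (hpi_sum : ∑ j ∈ Finset.range (k + 1), pi j = 1) :
    ((∑ j ∈ Finset.range (k + 1), |c j| * Real.sqrt (v j)) ^ 2
        ≤ ∑ j ∈ Finset.range (k + 1), (c j) ^ 2 * v j / pi j ∧
      ((∀ j ≤ k, pi j = |c j| * Real.sqrt (v j) /
          ∑ l ∈ Finset.range (k + 1), |c l| * Real.sqrt (v l)) →
        ∑ j ∈ Finset.range (k + 1), (c j) ^ 2 * v j / pi j
          = (∑ j ∈ Finset.range (k + 1), |c j| * Real.sqrt (v j)) ^ 2)) ∧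
    (∀ ν q : ℝ, ∀ lam : ℕ → ℝ, 0 < ν → 0 ≤ q →
      (∀ j ≤ k, 1 ≤ lam j) →
      ∑ j ∈ Finset.range (k + 1), c j = 1 →
      ∑ j ∈ Finset.range (k + 1), c j * lam j = 0 →
      0 < ν * ((∑ j ∈ Finset.range (k + 1), |c j| * (lam j) ^ (q / 2)) ^ 2 - 1)) := by
  have hmem : ∀ j ∈ Finset.range (k + 1), j ≤ k := fun j hj =>
    Nat.lt_succ_iff.mp (Finset.mem_range.mp hj)
  set S := Finset.range (k + 1) with hS
  have hterm_pos : ∀ j ∈ S, 0 < |c j| * Real.sqrt (v j) := by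
    intro j hj
    exact mul_pos (abs_pos.mpr (hc j (hmem j hj))) (Real.sqrt_pos.mpr (hv j (hmem j hj)))
  have hTpos : 0 < ∑ l ∈ S, |c l| * Real.sqrt (v l) :=
    Finset.sum_pos hterm_pos ⟨0, Finset.mem_range.mpr (Nat.succ_pos k)⟩
  constructor
  · constructor
    · -- Cauchy–Schwarz
      have key := Finset.sum_mul_sq_le_sq_mul_sq S
        (fun j => Real.sqrt (pi j))
        (fun j => |c j| * Real.sqrt (v j) / Real.sqrt (pi j))
      have h1 : ∑ j ∈ S, Real.sqrt (pi j) * (|c j| * Real.sqrt (v j) / Real.sqrt (pi j))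
          = ∑ j ∈ S, |c j| * Real.sqrt (v j) := by
        refine Finset.sum_congr rfl fun j hj => ?_
        have hp : Real.sqrt (pi j) ≠ 0 :=
          ne_of_gt (Real.sqrt_pos.mpr (hpi_pos j (hmem j hj)))
        field_simp
      have h2 : ∑ j ∈ S, Real.sqrt (pi j) ^ 2 = 1 := by
        rw [← hpi_sum]
        exact Finset.sum_congr rfl fun j hj =>
          Real.sq_sqrt (le_of_lt (hpi_pos j (hmem j hj)))
      have h3 : ∑ j ∈ S, (|c j| * Real.sqrt (v j) / Real.sqrt (pi j)) ^ 2
          = ∑ j ∈ S, (c j) ^ 2 * v j / pi j := by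
        refine Finset.sum_congr rfl fun j hj => ?_
        rw [div_pow, mul_pow, sq_abs, Real.sq_sqrt (le_of_lt (hv j (hmem j hj))),
          Real.sq_sqrt (le_of_lt (hpi_pos j (hmem j hj)))]
      rw [h1, h2, h3, one_mul] at key
      exact key
    · -- equality case
      intro hopt
      have : ∑ j ∈ S, (c j) ^ 2 * v j / pi j
          = ∑ j ∈ S, (|c j| * Real.sqrt (v j)) * (∑ l ∈ S, |c l| * Real.sqrt (v l)) := by
        refine Finset.sum_congr rfl fun j hj => ?_
        rw [hopt j (hmem j hj)]
        have hcv : (c j) ^ 2 * v j = (|c j| * Real.sqrt (v j)) ^ 2 := by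
          rw [mul_pow, sq_abs, Real.sq_sqrt (le_of_lt (hv j (hmem j hj)))]
        have ha : |c j| * Real.sqrt (v j) ≠ 0 := ne_of_gt (hterm_pos j hj)
        rw [hcv, div_div_eq_mul_div, sq]
        field_simp
      rw [this, ← Finset.sum_mul, sq]
  · -- part (ii)
    intro ν q lam hν hq hlam hcsum hclam
    -- some coefficient is negative
    have hneg : ∃ j ∈ S, c j < 0 := by
      by_contra h
      push_neg at h
      have : (1 : ℝ) ≤ ∑ j ∈ S, c j * lam j := by
        rw [← hcsum]
        exact Finset.sum_le_sum fun j hj =>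
          le_mul_of_one_le_right (h j hj) (hlam j (hmem j hj))
      rw [hclam] at this; linarith
    obtain ⟨j₀, hj₀S, hj₀⟩ := hneg
    have habs : (1 : ℝ) < ∑ j ∈ S, |c j| := by
      rw [← hcsum]
      exact Finset.sum_lt_sum (fun j _ => le_abs_self _)
        ⟨j₀, hj₀S, by rw [abs_of_neg hj₀]; linarith⟩
    have hge : ∑ j ∈ S, |c j| ≤ ∑ j ∈ S, |c j| * (lam j) ^ (q / 2) :=
      Finset.sum_le_sum fun j hj =>
        le_mul_of_one_le_right (abs_nonneg _)
          (Real.one_le_rpow (hlam j (hmem j hj)) (by linarith))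
    have hA : (1 : ℝ) < ∑ j ∈ S, |c j| * (lam j) ^ (q / 2) := lt_of_lt_of_le habs hge
    have : (1 : ℝ) < (∑ j ∈ S, |c j| * (lam j) ^ (q / 2)) ^ 2 := by nlinarith
    have : 0 < (∑ j ∈ S, |c j| * (lam j) ^ (q / 2)) ^ 2 - 1 := by linarith
    exact mul_pos hν this
end
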